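/- arXiv:math/0105120 — 2 statements merged into one kernel-verified Lean document; each statement's English description precedes it below -/
import Mathlib

section
/- For every fixed a > 0 and u > 0, the function w ↦ C_a(u,w), defined for Re(w) < 0 by the convergent integral C_a(u,w) = 2∫_a^∞ cos(2πut) t^(w−1) dt, extends to an entire function of w. -/
open MeasureTheory Complex Set Real
open Filter Topology
open scoped Interval

noncomputable section

namespace S4

lemma norm_cpow_le {z : ℂ} (hz : 0 < z.re) (s : ℂ) :
    ‖z ^ s‖ ≤ ‖z‖ ^ s.re * Real.exp (π / 2 * |s.im|) := by
  have hz0 : z ≠ 0 := by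
    intro h; rw [h] at hz; simp at hz
  rw [Complex.norm_cpow_of_ne_zero hz0]
  rw [div_eq_mul_inv, ← Real.exp_neg]
  have h2 : Real.exp (-(z.arg * s.im)) ≤ Real.exp (π / 2 * |s.im|) := by
    apply Real.exp_le_exp.2
    calc -(z.arg * s.im) ≤ |z.arg * s.im| := neg_le_abs _
      _ = |z.arg| * |s.im| := abs_mul _ _
      _ ≤ π / 2 * |s.im| := by
          gcongr
          exact Complex.abs_arg_le_pi_div_two_iff.2 hz.le
  exact mul_le_mul_of_nonneg_left h2 (Real.rpow_nonneg (norm_nonneg z) _)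

lemma rpow_sandwich {t p p₁ p₂ : ℝ} (ht : 0 < t) (h1 : p₁ ≤ p) (h2 : p ≤ p₂) :
    t ^ p ≤ t ^ p₁ + t ^ p₂ := by
  rcases le_total t 1 with h | h
  · have : t ^ p ≤ t ^ p₁ := Real.rpow_le_rpow_of_exponent_ge ht h h1
    have h0 : (0:ℝ) ≤ t ^ p₂ := Real.rpow_nonneg ht.le _
    linarith
  · have : t ^ p ≤ t ^ p₂ := Real.rpow_le_rpow_of_exponent_le h h2
    have h0 : (0:ℝ) ≤ t ^ p₁ := Real.rpow_nonneg ht.le _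
    linarith

lemma rpow_base_bound {t c d : ℝ} (hc : 0 < c) (hct : c ≤ t) (htd : t ≤ d) (p : ℝ) :
    t ^ p ≤ c ^ p + d ^ |p| := by
  rcases le_or_gt p 0 with hp | hp
  · have h1 : t ^ p ≤ c ^ p := Real.rpow_le_rpow_of_nonpos hc hct hp
    have h0 : (0:ℝ) ≤ d ^ |p| := Real.rpow_nonneg (by linarith) _
    linarith
  · have h1 : t ^ p ≤ d ^ p := Real.rpow_le_rpow (by linarith) htd hp.le
    rw [abs_of_pos hp]
    have h0 : (0:ℝ) ≤ c ^ p := Real.rpow_nonneg hc.le _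
    linarith

variable {a b ε : ℝ}

lemma z_re (ha : 0 < a) (y : ℝ) : ((a:ℂ) + ↑ε * ↑y * I).re = a := by simp

lemma z_im (y : ℝ) : ((a:ℂ) + ↑ε * ↑y * I).im = ε * y := by simp

lemma z_abs_le (hε : ε * ε = 1) (ha : 0 < a) {y : ℝ} (hy : 0 ≤ y) :
    ‖(a:ℂ) + ↑ε * ↑y * I‖ ≤ a + y := by
  have hε1 : |ε| = 1 := by
    have := abs_mul_abs_self ε
    nlinarith [abs_nonneg ε]
  calc ‖(a:ℂ) + ↑ε * ↑y * I‖
      ≤ |((a:ℂ) + ↑ε * ↑y * I).re| + |((a:ℂ) + ↑ε * ↑y * I).im| :=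
        Complex.norm_le_abs_re_add_abs_im _
    _ = a + y := by
        rw [z_re ha, z_im, abs_of_pos ha, abs_mul, hε1, one_mul, _root_.abs_of_nonneg hy]

lemma z_abs_ge (ha : 0 < a) (y : ℝ) : a ≤ ‖(a:ℂ) + ↑ε * ↑y * I‖ := by
  have := Complex.re_le_norm ((a:ℂ) + ↑ε * ↑y * I)
  rwa [z_re ha] at this

lemma cpow_norm_bound (hε : ε * ε = 1) (ha : 0 < a) {y : ℝ} (hy : 0 ≤ y) {s : ℂ}
    {p₁ p₂ m : ℝ} (h1 : p₁ ≤ s.re) (h2 : s.re ≤ p₂) (hm : |s.im| ≤ m) :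
    ‖((a:ℂ) + ↑ε * ↑y * I) ^ s‖ ≤
      Real.exp (π / 2 * m) * (a ^ p₁ + (a+y) ^ |p₁| + a ^ p₂ + (a+y) ^ |p₂|) := by
  set z := (a:ℂ) + ↑ε * ↑y * I with hz
  have hzre : 0 < z.re := by rw [z_re ha]; exact ha
  have habs1 : a ≤ ‖z‖ := z_abs_ge ha y
  have habs2 : ‖z‖ ≤ a + y := z_abs_le hε ha hy
  have h0 : 0 < ‖z‖ := lt_of_lt_of_le ha habs1
  calc ‖z ^ s‖ ≤ ‖z‖ ^ s.re * Real.exp (π / 2 * |s.im|) := norm_cpow_le hzre s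
    _ ≤ (‖z‖ ^ p₁ + ‖z‖ ^ p₂) * Real.exp (π / 2 * m) := by
        apply mul_le_mul (rpow_sandwich h0 h1 h2) (Real.exp_le_exp.2 ?_)
          (Real.exp_nonneg _) (by positivity)
        have : (0:ℝ) ≤ π / 2 := by positivity
        nlinarith [abs_nonneg s.im]
    _ ≤ ((a ^ p₁ + (a+y) ^ |p₁|) + (a ^ p₂ + (a+y) ^ |p₂|)) * Real.exp (π / 2 * m) := by
        gcongr <;> exact rpow_base_bound ha habs1 habs2 _
    _ = Real.exp (π / 2 * m) * (a ^ p₁ + (a+y) ^ |p₁| + a ^ p₂ + (a+y) ^ |p₂|) := by ring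

lemma exp_norm (hε : ε * ε = 1) (y : ℝ) :
    ‖Complex.exp (↑ε * I * ↑b * ((a:ℂ) + ↑ε * ↑y * I))‖ = Real.exp (-(b * y)) := by
  rw [Complex.norm_exp]
  congr 1
  have : (↑ε * I * ↑b * ((a:ℂ) + ↑ε * ↑y * I)).re = -(ε * ε * (b * y)) := by
    simp [Complex.mul_re, Complex.mul_im]
    ring
  rw [this, hε, one_mul]

lemma log_norm_bound (hε : ε * ε = 1) (ha : 0 < a) {y : ℝ} (hy : 0 ≤ y) :
    ‖Complex.log ((a:ℂ) + ↑ε * ↑y * I)‖ ≤ (2 * |Real.log a| + a + π) + y := by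
  set z := (a:ℂ) + ↑ε * ↑y * I with hz
  have habs1 : a ≤ ‖z‖ := z_abs_ge ha y
  have habs2 : ‖z‖ ≤ a + y := z_abs_le hε ha hy
  have h0 : 0 < ‖z‖ := lt_of_lt_of_le ha habs1
  have hre : |Real.log (‖z‖)| ≤ 2 * |Real.log a| + a + y := by
    have hlow : Real.log a ≤ Real.log (‖z‖) := Real.log_le_log ha habs1
    have hhigh : Real.log (‖z‖) ≤ Real.log (a + y) := Real.log_le_log h0 habs2
    have hcase : |Real.log (a + y)| ≤ |Real.log a| + a + y := by
      rcases le_total 1 (a + y) with h | h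
      · rw [_root_.abs_of_nonneg (Real.log_nonneg h)]
        have := Real.log_le_sub_one_of_pos (by linarith : (0:ℝ) < a + y)
        have h0' : (0:ℝ) ≤ |Real.log a| := abs_nonneg _
        linarith
      · rw [abs_of_nonpos (Real.log_nonpos (by positivity) h)]
        have ha1 : a ≤ 1 := by linarith
        have : -Real.log a ≤ |Real.log a| := neg_le_abs _
        have h2 : Real.log a ≤ Real.log (a+y) := Real.log_le_log ha (by linarith)
        linarith
    rw [abs_le]
    constructor
    · have : -(|Real.log a|) ≤ Real.log a := neg_abs_le _
      nlinarith [abs_nonneg (Real.log a)]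
    · have : Real.log (a+y) ≤ |Real.log (a+y)| := le_abs_self _
      nlinarith [abs_nonneg (Real.log a)]
  calc ‖Complex.log z‖ ≤ |(Complex.log z).re| + |(Complex.log z).im| :=
        Complex.norm_le_abs_re_add_abs_im _
    _ ≤ (2 * |Real.log a| + a + y) + π := by
        rw [Complex.log_re, Complex.log_im]
        exact add_le_add hre (Complex.abs_arg_le_pi z)
    _ = (2 * |Real.log a| + a + π) + y := by ring


lemma master_integrable {b c q : ℝ} (hb : 0 < b) (hc : 0 ≤ c) (hq : 0 ≤ q) :
    IntegrableOn (fun y : ℝ => Real.exp (-(b * y)) * (c + y) ^ q) (Ioi 0) := by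
  have hmeas : AEStronglyMeasurable (fun y : ℝ => Real.exp (-(b * y)) * (c + y) ^ q)
      (volume.restrict (Ioi (0:ℝ))) := by
    apply ContinuousOn.aestronglyMeasurable _ measurableSet_Ioi
    apply ContinuousOn.mul (Continuous.continuousOn (by continuity))
    apply ContinuousOn.rpow_const (by fun_prop)
    intro y hy
    left
    have : (0:ℝ) < y := hy
    positivity
  apply Integrable.mono' (g := fun y : ℝ =>
      2 ^ q * c ^ q * Real.exp (-(b * y)) + 2 ^ q * (y ^ q * Real.exp (-(b * y)))) _ hmeas
  · filter_upwards [ae_restrict_mem measurableSet_Ioi] with y hy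
    have hy0 : (0:ℝ) < y := hy
    rw [Real.norm_eq_abs, abs_mul, _root_.abs_of_nonneg (Real.exp_nonneg _),
      _root_.abs_of_nonneg (Real.rpow_nonneg (by positivity) _)]
    have h1 : (c + y) ^ q ≤ 2 ^ q * (c ^ q + y ^ q) := by
      have h2 : c + y ≤ 2 * max c y := by
        rcases le_total c y with h | h
        · simp [max_eq_right h]; linarith
        · simp [max_eq_left h]; linarith
      calc (c + y) ^ q ≤ (2 * max c y) ^ q :=
            Real.rpow_le_rpow (by positivity) h2 hq
        _ = 2 ^ q * (max c y) ^ q := Real.mul_rpow (by norm_num) (le_max_of_le_right hy0.le)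
        _ ≤ 2 ^ q * (c ^ q + y ^ q) := by
            gcongr
            rcases le_total c y with h | h
            · rw [max_eq_right h]
              have : (0:ℝ) ≤ c ^ q := Real.rpow_nonneg hc _
              linarith
            · rw [max_eq_left h]
              have : (0:ℝ) ≤ y ^ q := Real.rpow_nonneg hy0.le _
              linarith
    calc Real.exp (-(b * y)) * (c + y) ^ q
        ≤ Real.exp (-(b * y)) * (2 ^ q * (c ^ q + y ^ q)) := by
          gcongr
      _ = 2 ^ q * c ^ q * Real.exp (-(b * y)) + 2 ^ q * (y ^ q * Real.exp (-(b * y))) := by ring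
  · have h1 : IntegrableOn (fun y : ℝ => Real.exp (-(b * y))) (Ioi 0) := by
      have := exp_neg_integrableOn_Ioi 0 hb
      simpa [neg_mul] using this
    have h2 : IntegrableOn (fun x : ℝ => x ^ q * Real.exp (-(b * x))) (Ioi 0) := by
      have h := integrableOn_rpow_mul_exp_neg_mul_rpow (show (-1:ℝ) < q by linarith)
        one_pos hb
      have he : (fun x : ℝ => x ^ q * Real.exp (-b * x ^ (1:ℝ)))
          = fun x : ℝ => x ^ q * Real.exp (-(b * x)) := by
        funext x
        rw [Real.rpow_one, neg_mul]
      rwa [he] at h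
    exact (h1.const_mul _).add (h2.const_mul _)

lemma master2 {b c q l : ℝ} (hb : 0 < b) (hc : 0 ≤ c) (hq : 0 ≤ q) (hl : 0 ≤ l) :
    IntegrableOn (fun y : ℝ => Real.exp (-(b * y)) * (c + y) ^ q * (l + y)) (Ioi 0) := by
  have hmeas : AEStronglyMeasurable (fun y : ℝ => Real.exp (-(b * y)) * (c + y) ^ q * (l + y))
      (volume.restrict (Ioi (0:ℝ))) := by
    apply ContinuousOn.aestronglyMeasurable _ measurableSet_Ioi
    apply ContinuousOn.mul _ (by fun_prop)
    apply ContinuousOn.mul (Continuous.continuousOn (by continuity))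
    apply ContinuousOn.rpow_const (by fun_prop)
    intro y hy
    left
    have : (0:ℝ) < y := hy
    positivity
  apply Integrable.mono' (g := fun y : ℝ =>
      (l + 1) * (Real.exp (-(b * y)) * ((c + 1) + y) ^ (q + 1))) _ hmeas
  · filter_upwards [ae_restrict_mem measurableSet_Ioi] with y hy
    have hy0 : (0:ℝ) < y := hy
    rw [Real.norm_eq_abs, _root_.abs_of_nonneg (by positivity)]
    have h1 : (c + y) ^ q ≤ ((c + 1) + y) ^ q :=
      Real.rpow_le_rpow (by positivity) (by linarith) hq
    have h2 : l + y ≤ (l + 1) * (1 + y) := by nlinarith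
    have h3 : (1:ℝ) + y ≤ (c + 1) + y := by linarith
    have h4 : (0:ℝ) < (c + 1) + y := by linarith
    calc Real.exp (-(b * y)) * (c + y) ^ q * (l + y)
        ≤ Real.exp (-(b * y)) * ((c + 1) + y) ^ q * ((l + 1) * (1 + y)) := by
          apply mul_le_mul _ h2 (by positivity) (by positivity)
          gcongr
      _ ≤ Real.exp (-(b * y)) * ((c + 1) + y) ^ q * ((l + 1) * ((c + 1) + y)) := by
          gcongr
      _ = (l + 1) * (Real.exp (-(b * y)) * (((c + 1) + y) ^ q * ((c + 1) + y) ^ (1:ℝ))) := by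
          rw [Real.rpow_one]; ring
      _ = (l + 1) * (Real.exp (-(b * y)) * ((c + 1) + y) ^ (q + 1)) := by
          rw [← Real.rpow_add h4]
  · apply Integrable.const_mul
    exact master_integrable hb (by linarith) (by linarith)

lemma diff_vint (hε : ε * ε = 1) (ha : 0 < a) (hb : 0 < b) :
    Differentiable ℂ (fun w : ℂ => ∫ y in Ioi (0:ℝ),
      Complex.exp (↑ε * I * ↑b * ((a:ℂ) + ↑ε * ↑y * I)) * ((a:ℂ) + ↑ε * ↑y * I) ^ (w - 1)) := by
  intro w₀
  set p₁ : ℝ := w₀.re - 2 with hp₁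
  set p₂ : ℝ := w₀.re with hp₂
  set m : ℝ := |w₀.im| + 1 with hm
  set E : ℝ := Real.exp (π / 2 * m) with hE
  set l : ℝ := 2 * |Real.log a| + a + π with hl
  have hl1 : (1:ℝ) ≤ l := by
    have := Real.pi_gt_three
    have := abs_nonneg (Real.log a)
    simp only [hl]; nlinarith
  have hzcont : Continuous fun y : ℝ => (a:ℂ) + ↑ε * ↑y * I := by continuity
  have hslit : ∀ y : ℝ, ((a:ℂ) + ↑ε * ↑y * I) ∈ Complex.slitPlane := fun y =>
    Or.inl (by rw [z_re ha]; exact ha)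
  have hz0 : ∀ y : ℝ, ((a:ℂ) + ↑ε * ↑y * I) ≠ 0 := fun y =>
    Complex.slitPlane_ne_zero (hslit y)
  have hcpow : ∀ s : ℂ, Continuous fun y : ℝ => ((a:ℂ) + ↑ε * ↑y * I) ^ s := by
    intro s
    rw [continuous_iff_continuousAt]
    intro y
    exact ContinuousAt.comp (x := y) (g := fun z : ℂ => z ^ s)
      (continuousAt_cpow_const (hslit y)) hzcont.continuousAt
  have hlogc : Continuous fun y : ℝ => Complex.log ((a:ℂ) + ↑ε * ↑y * I) := by
    rw [continuous_iff_continuousAt]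
    intro y
    exact ContinuousAt.comp (x := y) (g := Complex.log)
      (continuousAt_clog (hslit y)) hzcont.continuousAt
  have hexpc : Continuous fun y : ℝ => Complex.exp (↑ε * I * ↑b * ((a:ℂ) + ↑ε * ↑y * I)) := by
    continuity
  -- membership estimates
  have hball : ∀ w ∈ Metric.ball w₀ 1,
      p₁ ≤ (w - 1).re ∧ (w - 1).re ≤ p₂ ∧ |(w - 1).im| ≤ m := by
    intro w hw
    rw [Metric.mem_ball, Complex.dist_eq] at hw
    have h1 : |(w - w₀).re| ≤ ‖w - w₀‖ := Complex.abs_re_le_norm _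
    have h2 : |(w - w₀).im| ≤ ‖w - w₀‖ := Complex.abs_im_le_norm _
    rw [Complex.sub_re] at h1
    rw [Complex.sub_im] at h2
    rw [abs_le] at h1
    refine ⟨?_, ?_, ?_⟩
    · simp only [Complex.sub_re, Complex.one_re, hp₁]; linarith
    · simp only [Complex.sub_re, Complex.one_re, hp₂]; linarith
    · simp only [Complex.sub_im, Complex.one_im, sub_zero, hm]
      have := abs_sub_abs_le_abs_sub w.im w₀.im
      have h3 : |w.im - w₀.im| ≤ ‖w - w₀‖ := h2
      linarith
  -- the bound function
  set bound : ℝ → ℝ := fun y =>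
      E * (Real.exp (-(b * y)) * (a + y) ^ (0:ℝ) * (l + y)) * (a ^ p₁ + a ^ p₂)
      + E * (Real.exp (-(b * y)) * (a + y) ^ |p₁| * (l + y))
      + E * (Real.exp (-(b * y)) * (a + y) ^ |p₂| * (l + y)) with hbound
  have hbound_int : Integrable bound (volume.restrict (Ioi (0:ℝ))) := by
    have m0 := master2 (b := b) (c := a) (q := 0) (l := l) hb ha.le le_rfl (by linarith)
    have m1 := master2 (b := b) (c := a) (q := |p₁|) (l := l) hb ha.le (abs_nonneg _)
      (by linarith)
    have m2 := master2 (b := b) (c := a) (q := |p₂|) (l := l) hb ha.le (abs_nonneg _)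
      (by linarith)
    exact (((m0.const_mul E).mul_const _).add (m1.const_mul E)).add (m2.const_mul E)
  -- pointwise bound for F'
  have hptF' : ∀ y ∈ Ioi (0:ℝ), ∀ w ∈ Metric.ball w₀ 1,
      ‖Complex.exp (↑ε * I * ↑b * ((a:ℂ) + ↑ε * ↑y * I)) *
        (((a:ℂ) + ↑ε * ↑y * I) ^ (w - 1) * Complex.log ((a:ℂ) + ↑ε * ↑y * I))‖ ≤ bound y := by
    intro y hy w hw
    have hy0 : (0:ℝ) < y := hy
    obtain ⟨hb1, hb2, hb3⟩ := hball w hw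
    have hcb := cpow_norm_bound hε ha hy0.le hb1 hb2 hb3
    have hlog := log_norm_bound hε ha hy0.le
    rw [norm_mul, norm_mul, exp_norm hε]
    have hS : (0:ℝ) ≤ a ^ p₁ + (a + y) ^ |p₁| + a ^ p₂ + (a + y) ^ |p₂| := by positivity
    calc Real.exp (-(b * y)) * (‖((a:ℂ) + ↑ε * ↑y * I) ^ (w - 1)‖ *
          ‖Complex.log ((a:ℂ) + ↑ε * ↑y * I)‖)
        ≤ Real.exp (-(b * y)) * ((E * (a ^ p₁ + (a + y) ^ |p₁| + a ^ p₂ + (a + y) ^ |p₂|)) *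
          (l + y)) := by
          apply mul_le_mul_of_nonneg_left _ (Real.exp_nonneg _)
          apply mul_le_mul hcb hlog (norm_nonneg _) (by positivity)
      _ = bound y := by
          simp only [hbound, Real.rpow_zero]
          ring
  -- pointwise bound for F itself (used for integrability)
  have hptF : ∀ y ∈ Ioi (0:ℝ), ∀ w ∈ Metric.ball w₀ 1,
      ‖Complex.exp (↑ε * I * ↑b * ((a:ℂ) + ↑ε * ↑y * I)) *
        ((a:ℂ) + ↑ε * ↑y * I) ^ (w - 1)‖ ≤ bound y := by
    intro y hy w hw
    have hy0 : (0:ℝ) < y := hy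
    obtain ⟨hb1, hb2, hb3⟩ := hball w hw
    have hcb := cpow_norm_bound hε ha hy0.le hb1 hb2 hb3
    rw [norm_mul, exp_norm hε]
    have hS : (0:ℝ) ≤ a ^ p₁ + (a + y) ^ |p₁| + a ^ p₂ + (a + y) ^ |p₂| := by positivity
    calc Real.exp (-(b * y)) * ‖((a:ℂ) + ↑ε * ↑y * I) ^ (w - 1)‖
        ≤ Real.exp (-(b * y)) * (E * (a ^ p₁ + (a + y) ^ |p₁| + a ^ p₂ + (a + y) ^ |p₂|)) :=
          mul_le_mul_of_nonneg_left hcb (Real.exp_nonneg _)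
      _ ≤ Real.exp (-(b * y)) * (E * (a ^ p₁ + (a + y) ^ |p₁| + a ^ p₂ + (a + y) ^ |p₂|)) *
          (l + y) := by
          nlinarith [mul_nonneg (Real.exp_nonneg (-(b*y))) (mul_nonneg (Real.exp_nonneg (π/2*m)) hS),
            Real.exp_nonneg (-(b*y)), Real.exp_nonneg (π/2*m)]
      _ = bound y := by
          simp only [hbound, Real.rpow_zero]
          ring
  have key := hasDerivAt_integral_of_dominated_loc_of_deriv_le
    (μ := volume.restrict (Ioi (0:ℝ)))
    (F := fun (w : ℂ) (y : ℝ) =>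
      Complex.exp (↑ε * I * ↑b * ((a:ℂ) + ↑ε * ↑y * I)) * ((a:ℂ) + ↑ε * ↑y * I) ^ (w - 1))
    (F' := fun (w : ℂ) (y : ℝ) =>
      Complex.exp (↑ε * I * ↑b * ((a:ℂ) + ↑ε * ↑y * I)) *
        (((a:ℂ) + ↑ε * ↑y * I) ^ (w - 1) * Complex.log ((a:ℂ) + ↑ε * ↑y * I)))
    (x₀ := w₀) (bound := bound) (Metric.ball_mem_nhds w₀ one_pos)
    (Filter.Eventually.of_forall fun w => ((hexpc.mul (hcpow (w - 1))).aestronglyMeasurable))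
    ?_ ?_ ?_ hbound_int ?_
  · exact key.2.differentiableAt
  · -- integrability of F w₀
    apply Integrable.mono' hbound_int
      ((hexpc.mul (hcpow (w₀ - 1))).aestronglyMeasurable)
    filter_upwards [ae_restrict_mem measurableSet_Ioi] with y hy
    exact hptF y hy w₀ (Metric.mem_ball_self one_pos)
  · exact ((hexpc.mul ((hcpow (w₀ - 1)).mul hlogc)).aestronglyMeasurable)
  · filter_upwards [ae_restrict_mem measurableSet_Ioi] with y hy
    intro w hw
    exact hptF' y hy w hw
  · filter_upwards [ae_restrict_mem measurableSet_Ioi] with y hy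
    intro w hw
    have hd : HasDerivAt (fun w : ℂ => ((a:ℂ) + ↑ε * ↑y * I) ^ (w - 1))
        (((a:ℂ) + ↑ε * ↑y * I) ^ (w - 1) * Complex.log ((a:ℂ) + ↑ε * ↑y * I)) w := by
      have h1 : HasDerivAt (fun w : ℂ => w - 1) 1 w := (hasDerivAt_id w).sub_const 1
      have := h1.const_cpow (c := (a:ℂ) + ↑ε * ↑y * I) (Or.inl (hz0 y))
      simpa using this
    simpa using hd.const_mul (Complex.exp (↑ε * I * ↑b * ((a:ℂ) + ↑ε * ↑y * I)))

/-- The function to be contour-shifted. -/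
def fn (b : ℝ) (w : ℂ) : ℂ → ℂ := fun z => Complex.exp (I * ↑b * z) * z ^ (w - 1)

variable {w : ℂ}

lemma fn_diffAt (b : ℝ) (w : ℂ) {z : ℂ} (hz : 0 < z.re) : DifferentiableAt ℂ (fn b w) z := by
  apply DifferentiableAt.mul
  · apply DifferentiableAt.cexp
    fun_prop
  · exact differentiableAt_id.cpow (differentiableAt_const _) (Or.inl hz)

lemma fn_norm_real (b : ℝ) (w : ℂ) {t : ℝ} (ht : 0 < t) :
    ‖fn b w t‖ = t ^ (w.re - 1) := by
  rw [fn, norm_mul, Complex.norm_exp,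
    Complex.norm_cpow_eq_rpow_re_of_pos ht]
  have h1 : (I * ↑b * ↑t).re = 0 := by simp
  rw [h1, Real.exp_zero, one_mul, Complex.sub_re, Complex.one_re]

lemma fn_norm_vert (b : ℝ) (hw : w.re < 0) {x y : ℝ} (hx : 0 < x) (hy : 0 ≤ y) :
    ‖fn b w (↑x + ↑y * I)‖ ≤ x ^ (w.re - 1) * Real.exp (π / 2 * |w.im|) * Real.exp (-(b * y)) := by
  have hzre : ((x:ℂ) + ↑y * I).re = x := by simp
  have hre_pos : 0 < ((x:ℂ) + ↑y * I).re := by rwa [hzre]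
  rw [fn, norm_mul]
  have h1 : ‖Complex.exp (I * ↑b * (↑x + ↑y * I))‖ = Real.exp (-(b * y)) := by
    rw [Complex.norm_exp]
    congr 1
    simp [Complex.mul_re, Complex.mul_im]
  rw [h1]
  have h2 : ‖((x:ℂ) + ↑y * I) ^ (w - 1)‖ ≤ x ^ (w.re - 1) * Real.exp (π / 2 * |w.im|) := by
    have := norm_cpow_le hre_pos (w - 1)
    have habs : x ≤ ‖(x:ℂ) + ↑y * I‖ := by
      have := Complex.re_le_norm ((x:ℂ) + ↑y * I)
      rwa [hzre] at this
    have h3 : ‖(x:ℂ) + ↑y * I‖ ^ (w - 1).re ≤ x ^ (w.re - 1) := by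
      rw [Complex.sub_re, Complex.one_re]
      exact Real.rpow_le_rpow_of_nonpos hx habs (by linarith)
    have h4 : |(w - 1).im| = |w.im| := by rw [Complex.sub_im, Complex.one_im, sub_zero]
    calc ‖((x:ℂ) + ↑y * I) ^ (w - 1)‖
        ≤ ‖(x:ℂ) + ↑y * I‖ ^ (w - 1).re * Real.exp (π / 2 * |(w - 1).im|) := this
      _ ≤ x ^ (w.re - 1) * Real.exp (π / 2 * |w.im|) := by
          rw [h4]
          exact mul_le_mul_of_nonneg_right h3 (Real.exp_nonneg _)
  calc Real.exp (-(b * y)) * ‖((x:ℂ) + ↑y * I) ^ (w - 1)‖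
      ≤ Real.exp (-(b * y)) * (x ^ (w.re - 1) * Real.exp (π / 2 * |w.im|)) :=
        mul_le_mul_of_nonneg_left h2 (Real.exp_nonneg _)
    _ = x ^ (w.re - 1) * Real.exp (π / 2 * |w.im|) * Real.exp (-(b * y)) := by ring

lemma exp_decay_int (hb : 0 < b) : IntegrableOn (fun y : ℝ => Real.exp (-(b * y))) (Ioi (0:ℝ)) := by
  have := exp_neg_integrableOn_Ioi (0:ℝ) hb
  simpa [neg_mul] using this

lemma fn_integrableOn_real (ha : 0 < a) (hw : w.re < 0) :
    IntegrableOn (fun t : ℝ => fn b w ↑t) (Ioi a) := by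
  have hmeas : AEStronglyMeasurable (fun t : ℝ => fn b w ↑t) (volume.restrict (Ioi a)) := by
    apply ContinuousOn.aestronglyMeasurable _ measurableSet_Ioi
    intro t ht
    have ht0 : (0:ℝ) < t := lt_trans ha ht
    have h1 : ContinuousAt (fn b w) (↑t : ℂ) :=
      (fn_diffAt b w (by simpa using ht0)).continuousAt
    exact (ContinuousAt.comp (x := t) h1 Complex.continuous_ofReal.continuousAt).continuousWithinAt
  apply Integrable.mono' (g := fun t : ℝ => t ^ (w.re - 1)) _ hmeas
  · filter_upwards [ae_restrict_mem measurableSet_Ioi] with t ht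
    rw [fn_norm_real b w (lt_trans ha ht)]
  · exact integrableOn_Ioi_rpow_of_lt (by linarith) ha

lemma fn_integrableOn_vert (hb : 0 < b) (hw : w.re < 0) {x : ℝ} (hx : 0 < x) :
    IntegrableOn (fun y : ℝ => fn b w (↑x + ↑y * I)) (Ioi (0:ℝ)) := by
  have hmeas : AEStronglyMeasurable (fun y : ℝ => fn b w (↑x + ↑y * I))
      (volume.restrict (Ioi (0:ℝ))) := by
    apply ContinuousOn.aestronglyMeasurable _ measurableSet_Ioi
    intro y hy
    have h1 : ContinuousAt (fn b w) ((x:ℂ) + ↑y * I) :=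
      (fn_diffAt b w (by simpa using hx)).continuousAt
    have h2 : Continuous fun y : ℝ => (x:ℂ) + ↑y * I := by continuity
    exact (ContinuousAt.comp (x := y) h1 h2.continuousAt).continuousWithinAt
  apply Integrable.mono'
    (g := fun y : ℝ => x ^ (w.re - 1) * Real.exp (π / 2 * |w.im|) * Real.exp (-(b * y))) _ hmeas
  · filter_upwards [ae_restrict_mem measurableSet_Ioi] with y hy
    exact fn_norm_vert b hw hx (le_of_lt hy)
  · exact (exp_decay_int hb).const_mul _

lemma step1 (ha : 0 < a) (hb : 0 < b) (hw : w.re < 0) {R : ℝ} (hR : a ≤ R) :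
    ∫ t in a..R, fn b w ↑t
      = I * (∫ y in Ioi (0:ℝ), fn b w (↑a + ↑y * I))
        - I * (∫ y in Ioi (0:ℝ), fn b w (↑R + ↑y * I)) := by
  have h0R : 0 < R := lt_of_lt_of_le ha hR
  set Va : ℂ := ∫ y in Ioi (0:ℝ), fn b w (↑a + ↑y * I) with hVa
  set VR : ℂ := ∫ y in Ioi (0:ℝ), fn b w (↑R + ↑y * I) with hVR
  set Φ : ℝ → ℂ := fun Y => (∫ x in a..R, fn b w ↑x) - (∫ x in a..R, fn b w (↑x + ↑Y * I))
      + I • (∫ y in (0:ℝ)..Y, fn b w (↑R + ↑y * I))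
      - I • (∫ y in (0:ℝ)..Y, fn b w (↑a + ↑y * I)) with hΦ
  have hrect : ∀ Y : ℝ, Φ Y = 0 := by
    intro Y
    have H : DifferentiableOn ℂ (fn b w)
        ([[((a:ℂ)).re, ((R:ℂ) + (Y:ℂ) * I).re]] ×ℂ [[((a:ℂ)).im, ((R:ℂ) + (Y:ℂ) * I).im]]) := by
      intro z hz
      have hz1 : z.re ∈ [[((a:ℂ)).re, ((R:ℂ) + (Y:ℂ) * I).re]] := hz.1
      have hz2 : z.re ∈ [[a, R]] := by simpa using hz1
      rw [uIcc_of_le hR] at hz2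
      exact (fn_diffAt b w (lt_of_lt_of_le ha hz2.1)).differentiableWithinAt
    have hres := Complex.integral_boundary_rect_eq_zero_of_differentiableOn
      (fn b w) (↑a) ((R:ℂ) + (Y:ℂ) * I) H
    simp only [Complex.ofReal_re, Complex.ofReal_im, Complex.add_re, Complex.add_im,
      Complex.mul_re, Complex.mul_im, Complex.I_re, Complex.I_im, mul_zero, mul_one,
      zero_mul, sub_zero, zero_add, add_zero, zero_sub, Complex.ofReal_zero, neg_zero] at hres
    simpa [hΦ] using hres
  have ttop : Tendsto (fun Y : ℝ => ∫ x in a..R, fn b w (↑x + ↑Y * I)) atTop (𝓝 0) := by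
    have hexp : Tendsto (fun Y : ℝ => Real.exp (-(b * Y))) atTop (𝓝 0) := by
      have h1 : Tendsto (fun Y : ℝ => b * Y) atTop atTop :=
        Tendsto.const_mul_atTop hb tendsto_id
      have h2 : Tendsto (fun Y : ℝ => -(b * Y)) atTop atBot :=
        tendsto_neg_atTop_atBot.comp h1
      exact Real.tendsto_exp_atBot.comp h2
    have hbnd : ∀ᶠ (Y : ℝ) in atTop, ‖∫ x in a..R, fn b w (↑x + ↑Y * I)‖ ≤
        a ^ (w.re - 1) * Real.exp (π / 2 * |w.im|) * Real.exp (-(b * Y)) * |R - a| := by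
      filter_upwards [eventually_ge_atTop (0:ℝ)] with Y hY
      apply intervalIntegral.norm_integral_le_of_norm_le_const
      intro x hx
      rw [uIoc_of_le hR] at hx
      have hx0 : 0 < x := lt_trans ha hx.1
      calc ‖fn b w (↑x + ↑Y * I)‖
          ≤ x ^ (w.re - 1) * Real.exp (π / 2 * |w.im|) * Real.exp (-(b * Y)) :=
            fn_norm_vert b hw hx0 hY
        _ ≤ a ^ (w.re - 1) * Real.exp (π / 2 * |w.im|) * Real.exp (-(b * Y)) := by
            have : x ^ (w.re - 1) ≤ a ^ (w.re - 1) :=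
              Real.rpow_le_rpow_of_nonpos ha hx.1.le (by linarith)
            apply mul_le_mul_of_nonneg_right _ (Real.exp_nonneg _)
            exact mul_le_mul_of_nonneg_right this (Real.exp_nonneg _)
    have hlim : Tendsto (fun Y : ℝ =>
        a ^ (w.re - 1) * Real.exp (π / 2 * |w.im|) * Real.exp (-(b * Y)) * |R - a|)
        atTop (𝓝 0) := by
      have := ((hexp.const_mul (a ^ (w.re - 1) * Real.exp (π / 2 * |w.im|))).mul_const |R - a|)
      simp only [mul_zero, zero_mul] at this
      convert this using 2 with Y
      try ring
    exact squeeze_zero_norm' hbnd hlim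
  have tva : Tendsto (fun Y : ℝ => ∫ y in (0:ℝ)..Y, fn b w (↑a + ↑y * I)) atTop (𝓝 Va) :=
    intervalIntegral_tendsto_integral_Ioi 0 (fn_integrableOn_vert hb hw ha) tendsto_id
  have tvR : Tendsto (fun Y : ℝ => ∫ y in (0:ℝ)..Y, fn b w (↑R + ↑y * I)) atTop (𝓝 VR) :=
    intervalIntegral_tendsto_integral_Ioi 0 (fn_integrableOn_vert hb hw h0R) tendsto_id
  have tΦ : Tendsto Φ atTop
      (𝓝 ((∫ t in a..R, fn b w ↑t) - 0 + I • VR - I • Va)) := by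
    apply Tendsto.sub _ (tva.const_smul I)
    apply Tendsto.add _ (tvR.const_smul I)
    exact Tendsto.sub tendsto_const_nhds ttop
  have tΦ0 : Tendsto Φ atTop (𝓝 0) := by
    have : Φ = fun _ => (0:ℂ) := funext hrect
    rw [this]
    exact tendsto_const_nhds
  have heq := tendsto_nhds_unique tΦ tΦ0
  have heq2 : (∫ t in a..R, fn b w ↑t) - 0 + I * VR - I * Va = 0 := by
    simpa [smul_eq_mul] using heq
  linear_combination heq2

lemma key_identity (ha : 0 < a) (hb : 0 < b) (hw : w.re < 0) :
    ∫ t in Ioi a, fn b w ↑t = I * ∫ y in Ioi (0:ℝ), fn b w (↑a + ↑y * I) := by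
  set Va : ℂ := ∫ y in Ioi (0:ℝ), fn b w (↑a + ↑y * I) with hVa
  have t1 : Tendsto (fun R : ℝ => ∫ t in a..R, fn b w ↑t) atTop (𝓝 (∫ t in Ioi a, fn b w ↑t)) :=
    intervalIntegral_tendsto_integral_Ioi a (fn_integrableOn_real ha hw) tendsto_id
  have t2 : Tendsto (fun R : ℝ => ∫ y in Ioi (0:ℝ), fn b w (↑R + ↑y * I)) atTop (𝓝 0) := by
    set K : ℝ := ∫ y in Ioi (0:ℝ), Real.exp (-(b * y)) with hK
    have hbnd : ∀ᶠ (R : ℝ) in atTop, ‖∫ y in Ioi (0:ℝ), fn b w (↑R + ↑y * I)‖ ≤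
        R ^ (w.re - 1) * Real.exp (π / 2 * |w.im|) * K := by
      filter_upwards [eventually_gt_atTop (0:ℝ)] with R hR0
      calc ‖∫ y in Ioi (0:ℝ), fn b w (↑R + ↑y * I)‖
          ≤ ∫ y in Ioi (0:ℝ), R ^ (w.re - 1) * Real.exp (π / 2 * |w.im|) * Real.exp (-(b * y)) := by
            apply norm_integral_le_of_norm_le ((exp_decay_int hb).const_mul _)
            filter_upwards [ae_restrict_mem measurableSet_Ioi] with y hy
            exact fn_norm_vert b hw hR0 (le_of_lt hy)
        _ = R ^ (w.re - 1) * Real.exp (π / 2 * |w.im|) * K := by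
            rw [integral_const_mul]
    have hlim : Tendsto (fun R : ℝ => R ^ (w.re - 1) * Real.exp (π / 2 * |w.im|) * K)
        atTop (𝓝 0) := by
      have h1 : Tendsto (fun R : ℝ => R ^ (w.re - 1)) atTop (𝓝 0) := by
        have := tendsto_rpow_neg_atTop (by linarith : (0:ℝ) < 1 - w.re)
        simpa [neg_sub] using this
      have := (h1.mul_const (Real.exp (π / 2 * |w.im|))).mul_const K
      simpa using this
    exact squeeze_zero_norm' hbnd hlim
  have t3 : Tendsto (fun R : ℝ => I * Va - I * (∫ y in Ioi (0:ℝ), fn b w (↑R + ↑y * I)))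
      atTop (𝓝 (I * Va - I * 0)) := tendsto_const_nhds.sub (t2.const_mul I)
  have t4 : Tendsto (fun R : ℝ => ∫ t in a..R, fn b w ↑t) atTop (𝓝 (I * Va - I * 0)) := by
    apply Tendsto.congr' _ t3
    filter_upwards [eventually_ge_atTop a] with R hR
    exact (step1 ha hb hw hR).symm
  have := tendsto_nhds_unique t1 t4
  rw [this]
  ring

end S4

open S4 in
/-- for fixed `a > 0` and `u > 0`, the function `w ↦ C_a(u,w)`, defined for
`Re(w) < 0` by `C_a(u,w) = 2∫_a^∞ cos(2πut) t^(w−1) dt`, extends to an entire function. -/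
theorem statement4 (a u : ℝ) (ha : 0 < a) (hu : 0 < u) :
    ∃ C : ℂ → ℂ, Differentiable ℂ C ∧
      ∀ w : ℂ, w.re < 0 →
        C w = 2 * ∫ t in Ioi a, (Real.cos (2 * π * u * t) : ℂ) * (t : ℂ) ^ (w - 1) := by
  set b : ℝ := 2 * π * u with hbdef
  have hb : 0 < b := by positivity
  refine ⟨fun w => I * (∫ y in Ioi (0:ℝ),
      Complex.exp (↑(1:ℝ) * I * ↑b * ((a:ℂ) + ↑(1:ℝ) * ↑y * I)) *
        ((a:ℂ) + ↑(1:ℝ) * ↑y * I) ^ (w - 1))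
    - I * (∫ y in Ioi (0:ℝ),
      Complex.exp (↑(-1:ℝ) * I * ↑b * ((a:ℂ) + ↑(-1:ℝ) * ↑y * I)) *
        ((a:ℂ) + ↑(-1:ℝ) * ↑y * I) ^ (w - 1)), ?_, ?_⟩
  · exact ((diff_vint (by norm_num) ha hb).const_mul I).sub
      ((diff_vint (by norm_num) ha hb).const_mul I)
  intro w hw
  have hG1 : (fun y : ℝ => Complex.exp (↑(1:ℝ) * I * ↑b * ((a:ℂ) + ↑(1:ℝ) * ↑y * I)) *
      ((a:ℂ) + ↑(1:ℝ) * ↑y * I) ^ (w - 1)) = fun y : ℝ => fn b w ((a:ℂ) + ↑y * I) := by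
    funext y
    simp [fn]
  have hG2 : (fun y : ℝ => Complex.exp (↑(-1:ℝ) * I * ↑b * ((a:ℂ) + ↑(-1:ℝ) * ↑y * I)) *
      ((a:ℂ) + ↑(-1:ℝ) * ↑y * I) ^ (w - 1))
      = fun y : ℝ => Complex.exp (-(I * ↑b * ((a:ℂ) - ↑y * I))) * ((a:ℂ) - ↑y * I) ^ (w - 1) := by
    funext y
    have h1 : ((a:ℂ) + ↑(-1:ℝ) * ↑y * I) = (a:ℂ) - ↑y * I := by push_cast; ring
    rw [h1]
    congr 2
    push_cast
    ring
  simp only [hG1, hG2]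
  -- key identities
  have hkey1 : ∫ t in Ioi a, fn b w ↑t = I * ∫ y in Ioi (0:ℝ), fn b w (↑a + ↑y * I) :=
    key_identity ha hb hw
  have hwc : ((starRingEnd ℂ) w).re < 0 := by simpa using hw
  have hkey2 : ∫ t in Ioi a, fn b ((starRingEnd ℂ) w) ↑t
      = I * ∫ y in Ioi (0:ℝ), fn b ((starRingEnd ℂ) w) (↑a + ↑y * I) :=
    key_identity ha hb hwc
  -- the conjugated identity
  have hfneg : ∫ t in Ioi a, fn (-b) w ↑t
      = -I * ∫ y in Ioi (0:ℝ),
          Complex.exp (-(I * ↑b * ((a:ℂ) - ↑y * I))) * ((a:ℂ) - ↑y * I) ^ (w - 1) := by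
    have hpt : EqOn (fun t : ℝ => fn (-b) w ↑t)
        (fun t : ℝ => (starRingEnd ℂ) (fn b ((starRingEnd ℂ) w) ↑t)) (Ioi a) := by
      intro t ht
      have ht0 : (0:ℝ) < t := lt_trans ha ht
      simp only [fn]
      rw [map_mul]
      congr 1
      · rw [← Complex.exp_conj]
        congr 1
        simp only [map_mul, Complex.conj_I, Complex.conj_ofReal]
        push_cast
        ring
      · have harg : Complex.arg ↑t ≠ π := by
          rw [Complex.arg_ofReal_of_nonneg ht0.le]
          exact Ne.symm Real.pi_ne_zero
        have h := Complex.conj_cpow (↑t) (w - 1) harg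
        simpa [Complex.conj_ofReal, map_sub, map_one] using h
    calc ∫ t in Ioi a, fn (-b) w ↑t
        = ∫ t in Ioi a, (starRingEnd ℂ) (fn b ((starRingEnd ℂ) w) ↑t) :=
          setIntegral_congr_fun measurableSet_Ioi hpt
      _ = (starRingEnd ℂ) (∫ t in Ioi a, fn b ((starRingEnd ℂ) w) ↑t) := integral_conj
      _ = (starRingEnd ℂ) (I * ∫ y in Ioi (0:ℝ), fn b ((starRingEnd ℂ) w) (↑a + ↑y * I)) := by
          rw [hkey2]
      _ = -I * (starRingEnd ℂ) (∫ y in Ioi (0:ℝ), fn b ((starRingEnd ℂ) w) (↑a + ↑y * I)) := by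
          rw [map_mul, Complex.conj_I]
          try ring
      _ = -I * ∫ y in Ioi (0:ℝ), (starRingEnd ℂ) (fn b ((starRingEnd ℂ) w) (↑a + ↑y * I)) := by
          rw [integral_conj]
      _ = -I * ∫ y in Ioi (0:ℝ),
            Complex.exp (-(I * ↑b * ((a:ℂ) - ↑y * I))) * ((a:ℂ) - ↑y * I) ^ (w - 1) := by
          congr 1
          apply setIntegral_congr_fun measurableSet_Ioi
          intro y hy
          simp only [fn]
          rw [map_mul]
          congr 1
          · rw [← Complex.exp_conj]
            congr 1
            simp only [map_mul, map_add, Complex.conj_I, Complex.conj_ofReal]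
            ring
          · have harg : Complex.arg ((a:ℂ) + ↑y * I) ≠ π := by
              intro h
              have := Complex.arg_eq_pi_iff.1 h
              have hre : ((a:ℂ) + ↑y * I).re = a := by simp
              rw [hre] at this
              linarith [this.1]
            have h := Complex.conj_cpow ((a:ℂ) + ↑y * I) (w - 1) harg
            have hcx : (starRingEnd ℂ) ((a:ℂ) + ↑y * I) = (a:ℂ) - ↑y * I := by
              simp [map_add, map_mul, Complex.conj_I, Complex.conj_ofReal]
              ring
            rw [hcx] at h
            rw [map_sub, map_one] at h
            exact h.symm
  -- splitting the cosine
  have hi1 : IntegrableOn (fun t : ℝ => fn b w ↑t) (Ioi a) := fn_integrableOn_real ha hw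
  have hi2 : IntegrableOn (fun t : ℝ => fn (-b) w ↑t) (Ioi a) := fn_integrableOn_real ha hw
  have hsplit : (2:ℂ) * ∫ t in Ioi a, (Real.cos (b * t) : ℂ) * (t : ℂ) ^ (w - 1)
      = (∫ t in Ioi a, fn b w ↑t) + ∫ t in Ioi a, fn (-b) w ↑t := by
    rw [← integral_add hi1 hi2, ← integral_const_mul]
    apply setIntegral_congr_fun measurableSet_Ioi
    intro t ht
    have ht0 : (0:ℝ) < t := lt_trans ha ht
    have h2c : (2:ℂ) * ↑(Real.cos (b * t))
        = Complex.exp (I * ↑b * ↑t) + Complex.exp (I * ↑(-b) * ↑t) := by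
      rw [Complex.ofReal_cos, Complex.two_cos]
      congr 1
      · congr 1
        push_cast
        ring
      · congr 1
        push_cast
        ring
    simp only [fn]
    linear_combination ((t:ℂ) ^ (w - 1)) * h2c
  calc I * (∫ y in Ioi (0:ℝ), fn b w (↑a + ↑y * I))
      - I * (∫ y in Ioi (0:ℝ),
          Complex.exp (-(I * ↑b * ((a:ℂ) - ↑y * I))) * ((a:ℂ) - ↑y * I) ^ (w - 1))
      = (∫ t in Ioi a, fn b w ↑t) + ∫ t in Ioi a, fn (-b) w ↑t := by
        rw [← hkey1, hfneg]
        ring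
    _ = 2 * ∫ t in Ioi a, (Real.cos (b * t) : ℂ) * (t : ℂ) ^ (w - 1) := hsplit.symm
end
end

section
/- Let a > 0 and u > 0. For every complex w with Re(w) > 0, the entire extension C_a(u,w) of 2∫_a^∞ cos(2πut) t^(w−1) dt satisfies C_a(u,w) = γ₊(w) u^(−w) − 2∫₀^a cos(2πut) t^(w−1) dt = γ₊(w) u^(−w) − 2 Σ_{j=0}^∞ ((−1)^j / (2j)!) (2πu)^(2j) a^(2j+w) / (2j + w), where γ₊(w) = 2(2π)^(−w) cos(πw/2) Γ(w). -/
open MeasureTheory Complex Set Real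

open Filter Asymptotics

open scoped Topology Nat

noncomputable section

/-- `γ₊(s) = 2(2π)^(−s) cos(πs/2) Γ(s)`. -/
def gammaPlus (s : ℂ) : ℂ :=
  2 * (2 * (π : ℂ)) ^ (-s) * Complex.cos (π * s / 2) * Complex.Gamma s

lemma norm_cexp_mul_cpow (z q : ℂ) {t : ℝ} (ht : 0 < t) :
    ‖Complex.exp (z * t) * (t : ℂ) ^ q‖ = Real.exp (z.re * t) * t ^ q.re := by
  rw [norm_mul, Complex.norm_exp,
    Complex.norm_cpow_eq_rpow_re_of_pos ht]
  congr 1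
  simp

lemma contOn_cexp_mul_cpow (z q : ℂ) :
    ContinuousOn (fun t : ℝ => Complex.exp (z * t) * (t : ℂ) ^ q) (Ioi 0) := by
  apply ContinuousOn.mul
  · exact (Complex.continuous_exp.comp (continuous_const.mul Complex.continuous_ofReal)).continuousOn
  · intro t ht
    exact (Complex.continuousAt_ofReal_cpow_const t q (Or.inr (ne_of_gt ht))).continuousWithinAt

lemma intOn_Ioi_cexp_cpow {a : ℝ} (ha : 0 < a) {z q : ℂ} (hz : z.re ≤ 0) (hq : q.re < -1) :
    IntegrableOn (fun t : ℝ => Complex.exp (z * t) * (t : ℂ) ^ q) (Ioi a) := by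
  have hmeas : AEStronglyMeasurable (fun t : ℝ => Complex.exp (z * t) * (t : ℂ) ^ q)
      (volume.restrict (Ioi a)) :=
    ((contOn_cexp_mul_cpow z q).mono (fun t (ht : t ∈ Ioi a) => lt_trans ha ht)).aestronglyMeasurable
      measurableSet_Ioi
  refine ((integrableOn_Ioi_rpow_of_lt hq ha).congr_fun (fun t _ => rfl)
    measurableSet_Ioi).mono' hmeas ?_
  filter_upwards [ae_restrict_mem measurableSet_Ioi] with t ht
  rw [norm_cexp_mul_cpow z q (lt_trans ha ht)]
  have h1 : Real.exp (z.re * t) ≤ 1 := by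
    rw [Real.exp_le_one_iff]
    exact mul_nonpos_of_nonpos_of_nonneg hz (le_of_lt (lt_trans ha ht))
  have h2 : (0:ℝ) ≤ t ^ q.re := Real.rpow_nonneg (le_of_lt (lt_trans ha ht)) _
  calc Real.exp (z.re * t) * t ^ q.re ≤ 1 * t ^ q.re := by gcongr
    _ = t ^ q.re := one_mul _

/-- Integrability on `Ioi 0` of `e^{z t} t^q` when `Re z < 0` and `-1 < Re q`. -/
lemma intOn_Ioi_zero_cexp_cpow {z q : ℂ} (hz : z.re < 0) (hq : -1 < q.re) :
    IntegrableOn (fun t : ℝ => Complex.exp (z * t) * (t : ℂ) ^ q) (Ioi 0) := by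
  have hloc : LocallyIntegrableOn (fun t : ℝ => Complex.exp (z * t)) (Ioi 0) :=
    (Complex.continuous_exp.comp (continuous_const.mul Complex.continuous_ofReal))
      |>.locallyIntegrable.locallyIntegrableOn _
  have htop : (fun t : ℝ => Complex.exp (z * t)) =O[atTop] fun t : ℝ => Real.exp ((z.re/2) * t) := by
    rw [Asymptotics.isBigO_iff]
    refine ⟨1, ?_⟩
    filter_upwards [eventually_ge_atTop (0:ℝ)] with t ht
    rw [one_mul, Complex.norm_exp, Real.norm_eq_abs, Real.abs_exp]
    apply Real.exp_le_exp.mpr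
    have : (z * t).re = z.re * t := by simp
    rw [this]
    nlinarith
  have hbot : (fun t : ℝ => Complex.exp (z * t)) =O[nhdsWithin 0 (Ioi 0)]
      fun t : ℝ => (t : ℝ) ^ (-(0:ℝ)) := by
    simp only [neg_zero, Real.rpow_zero]
    rw [Asymptotics.isBigO_iff]
    refine ⟨1, ?_⟩
    filter_upwards [self_mem_nhdsWithin] with t (ht : t ∈ Ioi 0)
    rw [one_mul, Complex.norm_exp]
    simp only [norm_one]
    have : (z * t).re = z.re * t := by simp
    rw [this, Real.exp_le_one_iff]
    exact mul_nonpos_of_nonpos_of_nonneg hz.le ht.le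
  have h := mellinConvergent_of_isBigO_rpow_exp (a := -(z.re/2)) (b := 0) (s := q + 1)
      (by linarith) hloc (by simpa using htop) hbot (by simp; linarith)
  have := h  -- MellinConvergent f (q+1) : IntegrableOn (fun t => (t:ℂ)^(q+1-1) • cexp (z*t)) (Ioi 0)
  unfold MellinConvergent at this
  refine this.congr_fun (fun t ht => ?_) measurableSet_Ioi
  simp only [add_sub_cancel_right, smul_eq_mul]
  ring

lemma hasDerivAt_cexp_mul (z : ℂ) (t : ℝ) :
    HasDerivAt (fun s : ℝ => Complex.exp (z * s)) (z * Complex.exp (z * t)) t := by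
  have h1 := ((hasDerivAt_id (((t:ℝ)) : ℂ)).const_mul z).cexp
  simpa [mul_comm] using h1.comp_ofReal

lemma hasDerivAt_cpow_aux {w : ℂ} (hw : w ≠ 1) {t : ℝ} (ht : 0 < t) :
    HasDerivAt (fun y : ℝ => (y : ℂ) ^ (w - 1)) ((w - 1) * (t : ℂ) ^ (w - 2)) t := by
  have h2 : w - 2 ≠ -1 := by
    intro h; apply hw; have : w = -1 + 2 := by linear_combination h
    rw [this]; norm_num
  have h := (hasDerivAt_ofReal_cpow_const' ht.ne' h2).const_mul (w - 1)
  have hne : w - 1 ≠ 0 := sub_ne_zero.mpr hw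
  have heq : (fun y : ℝ => (w - 1) * ((y : ℂ) ^ (w - 2 + 1) / (w - 2 + 1))) =
      fun y : ℝ => (y : ℂ) ^ (w - 1) := by
    funext y
    have h3 : w - 2 + 1 = w - 1 := by ring
    rw [h3]
    field_simp
  rw [heq] at h
  convert h using 1

lemma ibp_Ioi {a : ℝ} (ha : 0 < a) {z w : ℂ} (hz : z ≠ 0) (hz' : z.re ≤ 0) (hw : w.re < 1)
    (hint : IntegrableOn (fun t : ℝ => Complex.exp (z * t) * (t : ℂ) ^ (w - 1)) (Ioi a)) :
    ∫ t in Ioi a, Complex.exp (z * t) * (t : ℂ) ^ (w - 1)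
      = -(Complex.exp (z * a) * (a : ℂ) ^ (w - 1) / z)
        - ((w - 1) / z) * ∫ t in Ioi a, Complex.exp (z * t) * (t : ℂ) ^ (w - 2) := by
  have hw1 : w ≠ 1 := by intro h; rw [h] at hw; simp at hw
  set f : ℝ → ℂ := fun t => Complex.exp (z * t) * (t : ℂ) ^ (w - 1) / z with hf
  set g : ℝ → ℂ := fun t => Complex.exp (z * t) * (t : ℂ) ^ (w - 1)
      + ((w - 1) / z) * (Complex.exp (z * t) * (t : ℂ) ^ (w - 2)) with hg
  have hint2 : IntegrableOn (fun t : ℝ => Complex.exp (z * t) * (t : ℂ) ^ (w - 2)) (Ioi a) := by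
    apply intOn_Ioi_cexp_cpow ha hz'
    simp only [Complex.sub_re]
    norm_num
    linarith
  have hderiv : ∀ t ∈ Ioi a, HasDerivAt f (g t) t := by
    intro t ht
    have h0t : (0:ℝ) < t := lt_trans ha ht
    have h := ((hasDerivAt_cexp_mul z t).mul (hasDerivAt_cpow_aux hw1 h0t)).div_const z
    have heq : (z * Complex.exp (z * t) * (t:ℂ) ^ (w - 1)
        + Complex.exp (z * t) * ((w - 1) * (t:ℂ) ^ (w - 2))) / z = g t := by
      rw [hg]
      field_simp
    rw [heq] at h
    exact h
  have hcont : ContinuousWithinAt f (Ici a) a := by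
    apply ContinuousAt.continuousWithinAt
    apply ContinuousAt.div_const
    exact ((Complex.continuous_exp.comp (continuous_const.mul
      Complex.continuous_ofReal)).continuousAt).mul
      (Complex.continuousAt_ofReal_cpow_const a (w - 1) (Or.inr ha.ne'))
  have hgint : IntegrableOn g (Ioi a) := hint.add (hint2.const_mul _)
  have htend : Tendsto f atTop (𝓝 (0:ℂ)) := by
    have hb : ∀ᶠ t : ℝ in atTop, ‖f t‖ ≤ t ^ (w.re - 1) / ‖z‖ := by
      filter_upwards [eventually_gt_atTop (0:ℝ)] with t ht
      rw [hf]
      simp only [norm_div]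
      rw [norm_cexp_mul_cpow z (w-1) ht]
      rw [div_le_div_iff_of_pos_right (norm_pos_iff.mpr hz)]
      have hre : (w - 1).re = w.re - 1 := by simp
      rw [hre]
      have h1 : Real.exp (z.re * t) ≤ 1 := by
        rw [Real.exp_le_one_iff]; exact mul_nonpos_of_nonpos_of_nonneg hz' ht.le
      have h2 : (0:ℝ) ≤ t ^ (w.re - 1) := Real.rpow_nonneg ht.le _
      nlinarith
    have hgg : Tendsto (fun t : ℝ => t ^ (w.re - 1) / ‖z‖) atTop (𝓝 (0:ℝ)) := by
      have h1 : Tendsto (fun t : ℝ => t ^ (w.re - 1)) atTop (𝓝 0) := by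
        have h2 := tendsto_rpow_neg_atTop (y := 1 - w.re) (by linarith)
        convert h2 using 2 with t
        rw [neg_sub]
      simpa using h1.div_const ‖z‖
    exact squeeze_zero_norm' hb hgg
  have key := integral_Ioi_of_hasDerivAt_of_tendsto hcont hderiv hgint htend
  have hsplit : ∫ t in Ioi a, g t
      = (∫ t in Ioi a, Complex.exp (z * t) * (t : ℂ) ^ (w - 1))
        + ((w - 1) / z) * ∫ t in Ioi a, Complex.exp (z * t) * (t : ℂ) ^ (w - 2) := by
    rw [hg]
    rw [integral_add hint (hint2.const_mul _)]
    congr 1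
    exact MeasureTheory.integral_const_mul _ _
  rw [hsplit] at key
  have hfa : f a = Complex.exp (z * a) * (a : ℂ) ^ (w - 1) / z := rfl
  rw [hfa] at key
  have hfin : (∫ t in Ioi a, Complex.exp (z * t) * (t : ℂ) ^ (w - 1))
      = (0 - Complex.exp (z * a) * (a : ℂ) ^ (w - 1) / z)
        - ((w - 1) / z) * ∫ t in Ioi a, Complex.exp (z * t) * (t : ℂ) ^ (w - 2) := by
    rw [← key]; ring
  rw [hfin]; ring

lemma aesm_cexp_cpow (z q : ℂ) : AEStronglyMeasurable
    (fun t : ℝ => Complex.exp (z * t) * (t : ℂ) ^ q) (volume.restrict (Ioi 0)) :=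
  (contOn_cexp_mul_cpow z q).aestronglyMeasurable measurableSet_Ioi

/-- The Gamma integral with complex scale parameter. -/
lemma gamma_integral_cexp {w : ℂ} (hw : 0 < w.re) {z : ℂ} (hz : 0 < z.re) :
    ∫ t in Ioi (0:ℝ), Complex.exp (-z * t) * (t : ℂ) ^ (w - 1)
      = Complex.Gamma w * z ^ (-w) := by
  set U : Set ℂ := {z : ℂ | 0 < z.re} with hU
  have hUopen : IsOpen U := isOpen_lt continuous_const Complex.continuous_re
  set G : ℂ → ℂ := fun z => ∫ t in Ioi (0:ℝ), Complex.exp (-z * t) * (t : ℂ) ^ (w - 1) with hG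
  set g : ℂ → ℂ := fun z => Complex.Gamma w * z ^ (-w) with hgdef
  have hwq : (-1:ℝ) < (w - 1).re := by simp; linarith
  have hInt : ∀ z ∈ U, IntegrableOn
      (fun t : ℝ => Complex.exp (-z * t) * (t : ℂ) ^ (w - 1)) (Ioi 0) := fun z hz =>
    intOn_Ioi_zero_cexp_cpow (by simp only [Complex.neg_re, neg_lt_zero]; exact hz) hwq
  -- differentiability of G on U
  have hGdiff : DifferentiableOn ℂ G U := by
    intro z₀ hz₀
    apply DifferentiableAt.differentiableWithinAt
    set δ : ℝ := z₀.re / 2 with hδ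
    have hδpos : 0 < δ := by simp only [hδ]; have : 0 < z₀.re := hz₀; linarith
    have hbound_int : Integrable (fun t : ℝ => Real.exp (-δ * t) * t ^ w.re)
        (volume.restrict (Ioi 0)) := by
      have h := (intOn_Ioi_zero_cexp_cpow (z := (-δ:ℝ)) (q := (w.re:ℂ))
        (by simpa using hδpos) (by simp; linarith)).norm
      refine h.congr ?_
      filter_upwards [ae_restrict_mem measurableSet_Ioi] with t ht
      have := norm_cexp_mul_cpow ((-δ:ℝ):ℂ) ((w.re:ℂ)) ht
      rw [show (((-δ:ℝ):ℂ) * (t:ℂ)) = ((-δ:ℝ)*t : ℝ) by push_cast; ring] at this ⊢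
      rw [this]
      norm_num
    have key := hasDerivAt_integral_of_dominated_loc_of_deriv_le (μ := volume.restrict (Ioi 0))
      (F := fun z (t : ℝ) => Complex.exp (-z * t) * (t : ℂ) ^ (w - 1))
      (F' := fun z (t : ℝ) => (-(t:ℂ)) * (Complex.exp (-z * t) * (t : ℂ) ^ (w - 1)))
      (x₀ := z₀) (bound := fun t => Real.exp (-δ * t) * t ^ w.re) (Metric.ball_mem_nhds z₀ hδpos)
      (Eventually.of_forall (fun z => aesm_cexp_cpow (-z) (w - 1)))
      (hInt z₀ hz₀)
      ((continuous_ofReal.neg.aestronglyMeasurable.restrict).mul (aesm_cexp_cpow (-z₀) (w - 1)))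
      ?_ hbound_int ?_
    · exact key.2.differentiableAt
    · -- bound
      filter_upwards [ae_restrict_mem measurableSet_Ioi] with t ht z hzball
      have h0t : (0:ℝ) < t := ht
      rw [norm_mul, norm_cexp_mul_cpow (-z) (w - 1) h0t]
      have hzre : δ ≤ z.re := by
        have h2 : ‖z - z₀‖ < δ := by rwa [Metric.mem_ball, dist_eq_norm] at hzball
        have h1 : |(z - z₀).re| ≤ ‖z - z₀‖ := Complex.abs_re_le_norm _
        have h3 := abs_le.mp (h1.trans h2.le)
        have h4 : -δ ≤ z.re - z₀.re := by simpa [Complex.sub_re] using h3.1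
        have h5 : z₀.re = 2*δ := by rw [hδ]; ring
        linarith
      have hnt : ‖(-(t:ℂ))‖ = t := by
        rw [norm_neg, Complex.norm_real, Real.norm_eq_abs, abs_of_pos h0t]
      rw [hnt]
      have hre : (-z).re = -z.re := by simp
      rw [hre]
      have hrw : t * (Real.exp (-z.re * t) * t ^ (w - 1).re)
          = Real.exp (-z.re * t) * t ^ w.re := by
        rw [show (w-1).re = w.re - 1 by simp, mul_comm t, mul_assoc,
          ← Real.rpow_add_one h0t.ne' (w.re - 1)]
        norm_num
      rw [hrw]
      apply mul_le_mul_of_nonneg_right _ (Real.rpow_nonneg h0t.le _)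
      rw [Real.exp_le_exp]
      nlinarith
    · -- differentiability pointwise
      filter_upwards [ae_restrict_mem measurableSet_Ioi] with t ht z hzball
      have h := ((hasDerivAt_id z).const_mul (-(t:ℂ))).cexp
      simp only [id_eq, mul_one] at h
      have hfun : (fun x : ℂ => Complex.exp (-(t:ℂ) * x)) = fun x : ℂ => Complex.exp (-x * t) := by
        funext y
        rw [show -(t:ℂ) * y = -y * t by ring]
      rw [hfun] at h
      have h1 : HasDerivAt (fun x : ℂ => Complex.exp (-x * t))
          ((-(t:ℂ)) * Complex.exp (-z * t)) z := by
        rw [show (-(t:ℂ)) * Complex.exp (-z * t) = Complex.exp (-(t:ℂ) * z) * -(t:ℂ) by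
          rw [show -(t:ℂ) * z = -z * t by ring]; ring]
        exact h
      have h2 := h1.mul_const ((t:ℂ) ^ (w - 1))
      rw [mul_assoc] at h2
      exact h2
  have hganal : AnalyticOnNhd ℂ g U := by
    apply DifferentiableOn.analyticOnNhd _ hUopen
    intro z hzU
    apply DifferentiableAt.differentiableWithinAt
    apply (differentiableAt_const _).mul
    exact ((hasDerivAt_id z).cpow_const (Or.inl hzU)).differentiableAt
  have hGanal : AnalyticOnNhd ℂ G U := hGdiff.analyticOnNhd hUopen
  -- equality for real positive z
  have hreal : ∀ r : ℝ, 0 < r → G (r:ℂ) = g (r:ℂ) := by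
    intro r hr
    have h := Complex.integral_cpow_mul_exp_neg_mul_Ioi hw hr
    have heq : ∀ t ∈ Ioi (0:ℝ), Complex.exp (-(r:ℂ) * t) * (t : ℂ) ^ (w - 1)
        = (t:ℂ) ^ (w - 1) * Complex.exp (-((r:ℂ) * (t:ℂ))) := by
      intro t _; rw [neg_mul, mul_comm]
    have hG' : G (r:ℂ) = (1/(r:ℂ)) ^ w * Complex.Gamma w := by
      show (∫ t in Ioi (0:ℝ), Complex.exp (-(r:ℂ) * t) * (t : ℂ) ^ (w - 1)) = _
      rw [setIntegral_congr_fun measurableSet_Ioi heq]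
      exact h
    have hpow : ((r:ℂ)) ^ (-w) = (1/(r:ℂ)) ^ w := by
      rw [cpow_neg, one_div, inv_cpow]
      rw [Complex.arg_ofReal_of_nonneg hr.le]
      exact Real.pi_ne_zero.symm
    show G (r:ℂ) = Complex.Gamma w * ((r:ℂ)) ^ (-w)
    rw [hG', hpow]; ring
  -- frequently equal near 1
  have hfreq : ∃ᶠ z in 𝓝[≠] (1:ℂ), G z = g z := by
    have hseq : Tendsto (fun n : ℕ => ((1 + 1/(n+1) : ℝ) : ℂ)) atTop (𝓝[≠] (1:ℂ)) := by
      apply tendsto_nhdsWithin_of_tendsto_nhds_of_eventually_within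
      · have h0 : Tendsto (fun n : ℕ => (1 + 1/(n+1) : ℝ)) atTop (𝓝 1) := by
          have := tendsto_one_div_add_atTop_nhds_zero_nat (𝕜 := ℝ)
          simpa using (tendsto_const_nhds (x := (1:ℝ)) (f := atTop)).add this
        have h1 := (Complex.continuous_ofReal.tendsto 1).comp h0
        simpa [Function.comp_def] using h1
      · filter_upwards with n
        simp only [mem_compl_iff, mem_singleton_iff]
        intro h
        have : (1 + 1/(n+1) : ℝ) = 1 := by exact_mod_cast h
        have hpos : (0:ℝ) < 1/(n+1) := by positivity
        linarith
    apply hseq.frequently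
    apply Filter.Frequently.of_forall
    intro n
    exact hreal _ (by positivity)
  have h1U : (1:ℂ) ∈ U := by simp [hU]
  have := hGanal.eqOn_of_preconnected_of_frequently_eq hganal
    ((convex_halfSpace_re_gt 0).isPreconnected) h1U hfreq
  exact this hz

lemma cpow_pm_I {ν : ℝ} (hν : 0 < ν) (w : ℂ) :
    ((ν:ℂ)*I)^(-w) + ((ν:ℂ)*(-I))^(-w) = (ν:ℂ)^(-w) * (2 * Complex.cos (π*w/2)) := by
  have hν0 : (ν:ℂ) ≠ 0 := ofReal_ne_zero.mpr hν.ne'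
  have h1 : ((ν:ℂ)*I) ≠ 0 := mul_ne_zero hν0 I_ne_zero
  have h2 : ((ν:ℂ)*(-I)) ≠ 0 := mul_ne_zero hν0 (neg_ne_zero.mpr I_ne_zero)
  rw [Complex.cpow_def_of_ne_zero h1, Complex.cpow_def_of_ne_zero h2,
    Complex.cpow_def_of_ne_zero hν0]
  rw [Complex.log_ofReal_mul hν I_ne_zero, Complex.log_ofReal_mul hν (neg_ne_zero.mpr I_ne_zero),
    Complex.log_I, Complex.log_neg_I]
  have e0 : ((Real.log ν : ℂ) + ↑π/2*I) * (-w)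
      = (Real.log ν : ℂ) * (-w) + (-(↑π * w / 2) * I) := by ring
  have e0' : ((Real.log ν : ℂ) + -(↑π/2)*I) * (-w)
      = (Real.log ν : ℂ) * (-w) + ((↑π * w / 2) * I) := by ring
  rw [e0, e0', Complex.exp_add, Complex.exp_add, Complex.two_cos,
    ← Complex.ofReal_log hν.le]
  ring

lemma gamma_pm_combine {u : ℝ} (hu : 0 < u) (w : ℂ) :
    Complex.Gamma w * (((2*π*u:ℝ):ℂ)*I)^(-w) + Complex.Gamma w * (((2*π*u:ℝ):ℂ)*(-I))^(-w)
      = gammaPlus w * (u:ℂ)^(-w) := by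
  have hν : (0:ℝ) < 2*π*u := by positivity
  have h := cpow_pm_I hν w
  have hsplit : (((2*π*u:ℝ)):ℂ)^(-w) = ((2*π:ℝ):ℂ)^(-w) * (u:ℂ)^(-w) := by
    rw [show (((2*π*u:ℝ)):ℂ) = (((2*π:ℝ)):ℂ) * ((u:ℝ):ℂ) by push_cast; ring]
    rw [mul_cpow_ofReal_nonneg (by positivity) hu.le]
  calc Complex.Gamma w * (((2*π*u:ℝ):ℂ)*I)^(-w) + Complex.Gamma w * (((2*π*u:ℝ):ℂ)*(-I))^(-w)
      = Complex.Gamma w * ((((2*π*u:ℝ):ℂ)*I)^(-w) + (((2*π*u:ℝ):ℂ)*(-I))^(-w)) := by ring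
    _ = Complex.Gamma w * ((((2*π*u:ℝ)):ℂ)^(-w) * (2 * Complex.cos (π*w/2))) := by rw [h]
    _ = gammaPlus w * (u:ℂ)^(-w) := by
        rw [hsplit, gammaPlus]
        rw [show ((2*π:ℝ):ℂ) = 2*(π:ℂ) by push_cast; ring]
        ring

/-- Mellin-type representation of the tail integral. -/
lemma tail_eq_mellin {a : ℝ} (ha : 0 < a) (z : ℂ) (w : ℂ) :
    ∫ t in Ioi a, Complex.exp (z*t) * (t:ℂ)^(w-2)
      = mellin ((Ioi a).indicator (fun t : ℝ => Complex.exp (z*t))) (w-1) := by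
  rw [mellin]
  have h1 : ∀ t : ℝ, (t:ℂ)^(w-1-1) • ((Ioi a).indicator (fun t : ℝ => Complex.exp (z*t)) t)
      = (Ioi a).indicator (fun t : ℝ => (t:ℂ)^(w-2) * Complex.exp (z*t)) t := by
    intro t
    by_cases ht : t ∈ Ioi a
    · rw [indicator_of_mem ht, indicator_of_mem ht, smul_eq_mul,
        show w-1-1 = w-2 by ring]
    · simp [indicator_of_notMem ht]
  simp_rw [h1]
  rw [setIntegral_indicator measurableSet_Ioi]
  rw [show Ioi (0:ℝ) ∩ Ioi a = Ioi a by rw [inter_eq_right]; exact fun t ht => lt_trans ha ht]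
  refine setIntegral_congr_fun measurableSet_Ioi (fun t _ => ?_)
  ring

lemma diff_tail {a : ℝ} (ha : 0 < a) {z : ℂ} (hz : z.re ≤ 0) {w : ℂ} (hw : w.re < 1) :
    DifferentiableAt ℂ (fun w => ∫ t in Ioi a, Complex.exp (z*t) * (t:ℂ)^(w-2)) w := by
  set g : ℝ → ℂ := (Ioi a).indicator (fun t : ℝ => Complex.exp (z*t)) with hg
  have hdm : DifferentiableAt ℂ (mellin g) (w-1) := by
    apply mellin_differentiableAt_of_isBigO_rpow (a := 0) (b := w.re - 2)
    · apply LocallyIntegrable.locallyIntegrableOn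
      exact (Complex.continuous_exp.comp
        (continuous_const.mul Complex.continuous_ofReal)).locallyIntegrable.indicator
        measurableSet_Ioi
    · rw [isBigO_iff]
      refine ⟨1, ?_⟩
      filter_upwards [eventually_gt_atTop (0:ℝ)] with t ht
      rw [one_mul]
      have h2 : ‖g t‖ ≤ 1 := by
        rw [hg]
        by_cases h : t ∈ Ioi a
        · rw [indicator_of_mem h]
          rw [Complex.norm_exp]
          rw [show (z*t).re = z.re * t by simp]
          rw [Real.exp_le_one_iff]
          exact mul_nonpos_of_nonpos_of_nonneg hz ht.le
        · rw [indicator_of_notMem h]; simp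
      refine h2.trans ?_
      simp
    · simp only [Complex.sub_re, Complex.one_re]; linarith
    · rw [isBigO_iff]
      refine ⟨1, ?_⟩
      filter_upwards [Ioo_mem_nhdsGT_of_mem (Set.mem_Ico.mpr ⟨le_refl (0:ℝ), ha⟩)]
        with t ht
      have h : t ∉ Ioi a := by
        simp only [mem_Ioi, not_lt]
        exact (ht.2).le
      rw [hg, indicator_of_notMem h]
      simp only [norm_zero, one_mul]
      positivity
    · simp only [Complex.sub_re, Complex.one_re]; linarith
  have := hdm.comp w ((differentiableAt_id (x := w)).sub (differentiableAt_const 1))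
  apply DifferentiableAt.congr_of_eventuallyEq this
  filter_upwards with v
  simp only [Function.comp_apply, id_eq]
  exact tail_eq_mellin ha z v

lemma head_eq_mellin {a : ℝ} (ha : 0 < a) (ν : ℝ) (w : ℂ) :
    ∫ t in Ioo (0:ℝ) a, ((Real.cos (ν*t) : ℝ):ℂ) * (t:ℂ)^(w-1)
      = mellin ((Ioo (0:ℝ) a).indicator (fun t : ℝ => ((Real.cos (ν*t) : ℝ):ℂ))) w := by
  rw [mellin]
  have h1 : ∀ t : ℝ, (t:ℂ)^(w-1) • ((Ioo (0:ℝ) a).indicator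
        (fun t : ℝ => ((Real.cos (ν*t) : ℝ):ℂ)) t)
      = (Ioo (0:ℝ) a).indicator (fun t : ℝ => (t:ℂ)^(w-1) * ((Real.cos (ν*t) : ℝ):ℂ)) t := by
    intro t
    by_cases ht : t ∈ Ioo (0:ℝ) a
    · simp [indicator_of_mem ht, smul_eq_mul]
    · simp [indicator_of_notMem ht]
  simp_rw [h1]
  rw [setIntegral_indicator measurableSet_Ioo]
  rw [show Ioi (0:ℝ) ∩ Ioo (0:ℝ) a = Ioo (0:ℝ) a by rw [inter_eq_right]; exact fun t ht => ht.1]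
  refine setIntegral_congr_fun measurableSet_Ioo (fun t _ => ?_)
  ring

lemma diff_head {a : ℝ} (ha : 0 < a) (ν : ℝ) {w : ℂ} (hw : 0 < w.re) :
    DifferentiableAt ℂ
      (fun w => ∫ t in Ioo (0:ℝ) a, ((Real.cos (ν*t) : ℝ):ℂ) * (t:ℂ)^(w-1)) w := by
  set g : ℝ → ℂ := (Ioo (0:ℝ) a).indicator (fun t : ℝ => ((Real.cos (ν*t) : ℝ):ℂ)) with hg
  have hdm : DifferentiableAt ℂ (mellin g) w := by
    apply mellin_differentiableAt_of_isBigO_rpow (a := w.re + 1) (b := 0)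
    · apply LocallyIntegrable.locallyIntegrableOn
      exact (Complex.continuous_ofReal.comp
        (Real.continuous_cos.comp (continuous_const.mul continuous_id))).locallyIntegrable.indicator
        measurableSet_Ioo
    · rw [isBigO_iff]
      refine ⟨1, ?_⟩
      filter_upwards [eventually_gt_atTop a] with t ht
      have h : t ∉ Ioo (0:ℝ) a := by
        simp only [mem_Ioo, not_and, not_lt]
        intro _; exact ht.le
      rw [hg, indicator_of_notMem h]
      simp only [norm_zero, one_mul]
      positivity
    · linarith
    · rw [isBigO_iff]
      refine ⟨1, ?_⟩
      filter_upwards [self_mem_nhdsWithin] with t (ht : t ∈ Ioi (0:ℝ))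
      have h2 : ‖g t‖ ≤ 1 := by
        rw [hg]
        by_cases h : t ∈ Ioo (0:ℝ) a
        · rw [indicator_of_mem h]
          rw [Complex.norm_real, Real.norm_eq_abs]
          exact Real.abs_cos_le_one _
        · rw [indicator_of_notMem h]; simp
      refine h2.trans ?_
      simp
    · exact hw
  apply DifferentiableAt.congr_of_eventuallyEq hdm
  filter_upwards with v
  rw [head_eq_mellin ha]

lemma summable_aux (x : ℝ) (K : ℝ) : Summable (fun j : ℕ => x ^ (2*j) / ((2*j)! : ℝ) * K) := by
  apply Summable.mul_right
  have h := (Real.summable_pow_div_factorial x).comp_injective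
    (fun m n h => by dsimp only at h; omega : Function.Injective (fun j : ℕ => 2*j))
  exact h

lemma integral_cpow_Ioo {a : ℝ} (ha : 0 < a) {q : ℂ} (hq : -1 < q.re) :
    ∫ t in Ioo (0:ℝ) a, (t:ℂ)^q = (a:ℂ)^(q+1)/(q+1) := by
  have h := integral_cpow (a := 0) (b := a) (r := q) (Or.inl hq)
  rw [intervalIntegral.integral_of_le ha.le, integral_Ioc_eq_integral_Ioo] at h
  have hne : q + 1 ≠ 0 := by
    intro hq0
    rw [Complex.ext_iff] at hq0
    simp at hq0
    linarith [hq0.1]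
  rw [h, Complex.ofReal_zero, Complex.zero_cpow hne]
  ring

lemma series_head {a : ℝ} (ha : 0 < a) {ν : ℝ} (hν : 0 < ν) {w : ℂ} (hw : 0 < w.re) :
    ∫ t in Ioo (0:ℝ) a, ((Real.cos (ν*t) : ℝ):ℂ) * (t:ℂ)^(w-1)
      = ∑' j : ℕ, ((-1:ℂ)^j / ((2*j)! : ℂ)) * ((ν:ℝ):ℂ)^(2*j)
          * (a:ℂ)^(((2*j:ℕ):ℂ)+w) / (((2*j:ℕ):ℂ)+w) := by
  set F : ℕ → ℝ → ℂ := fun j t =>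
    ((-1:ℂ)^j / ((2*j)! : ℂ)) * ((ν:ℝ):ℂ)^(2*j) * (t:ℂ)^(((2*j:ℕ):ℂ) + w - 1) with hF
  have hqre : ∀ j : ℕ, (-1:ℝ) < (((2*j:ℕ):ℂ) + w - 1).re := by
    intro j
    simp only [Complex.sub_re, Complex.add_re, Complex.natCast_re, Complex.one_re]
    have : (0:ℝ) ≤ (2*j:ℕ) := Nat.cast_nonneg _
    linarith
  have hFint : ∀ j : ℕ, IntegrableOn (F j) (Ioo (0:ℝ) a) := by
    intro j
    have h := intervalIntegral.intervalIntegrable_cpow' (a := 0) (b := a) (r := ((2*j:ℕ):ℂ) + w - 1) (hqre j)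
    rw [intervalIntegrable_iff_integrableOn_Ioc_of_le ha.le] at h
    exact (h.mono_set Ioo_subset_Ioc_self).const_mul _
  have hnorm : ∀ j : ℕ, ∀ t ∈ Ioo (0:ℝ) a,
      ‖F j t‖ = ν^(2*j) / ((2*j)! : ℝ) * t ^ ((2*j:ℕ) + w.re - 1) := by
    intro j t ht
    rw [hF]
    simp only [norm_mul, norm_div, norm_pow, norm_neg, norm_one, one_pow]
    rw [Complex.norm_cpow_eq_rpow_re_of_pos ht.1]
    have h1 : ‖((ν:ℝ):ℂ)‖ = ν := by rw [Complex.norm_real, Real.norm_eq_abs, abs_of_pos hν]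
    have h2 : ‖(((2*j)! : ℕ):ℂ)‖ = ((2*j)! : ℝ) := by
      rw [Complex.norm_natCast]
    rw [h1, h2]
    have h3 : (((2*j:ℕ):ℂ) + w - 1).re = (2*j:ℕ) + w.re - 1 := by
      simp [Complex.sub_re, Complex.add_re]
    rw [h3]
    ring
  have hbound : ∀ j : ℕ, (∫ t in Ioo (0:ℝ) a, ‖F j t‖)
      ≤ (ν*a) ^ (2*j) / ((2*j)! : ℝ) * ∫ t in Ioo (0:ℝ) a, t ^ (w.re - 1) := by
    intro j
    have hKint : IntegrableOn (fun t : ℝ => t ^ (w.re - 1)) (Ioo (0:ℝ) a) := by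
      have h := intervalIntegral.intervalIntegrable_rpow' (a := 0) (b := a) (r := w.re - 1) (by linarith)
      rw [intervalIntegrable_iff_integrableOn_Ioc_of_le ha.le] at h
      exact h.mono_set Ioo_subset_Ioc_self
    rw [← MeasureTheory.integral_const_mul]
    apply setIntegral_mono_on ((hFint j).norm) (hKint.const_mul _) measurableSet_Ioo
    intro t ht
    rw [hnorm j t ht]
    have ht0 : 0 < t := ht.1
    have hsplit : t ^ ((2*j:ℕ) + w.re - 1) = t ^ ((2*j:ℕ):ℝ) * t ^ (w.re - 1) := by
      rw [← Real.rpow_add ht0]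
      ring_nf
    rw [hsplit]
    have h4 : t ^ ((2*j:ℕ):ℝ) ≤ a ^ ((2*j:ℕ):ℝ) := by
      apply Real.rpow_le_rpow ht0.le ht.2.le (Nat.cast_nonneg _)
    have h5 : (0:ℝ) ≤ t ^ (w.re - 1) := Real.rpow_nonneg ht0.le _
    calc ν^(2*j) / ((2*j)! : ℝ) * (t ^ ((2*j:ℕ):ℝ) * t ^ (w.re - 1))
        ≤ ν^(2*j) / ((2*j)! : ℝ) * (a ^ ((2*j:ℕ):ℝ) * t ^ (w.re - 1)) := by
          apply mul_le_mul_of_nonneg_left _ (by positivity)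
          exact mul_le_mul_of_nonneg_right h4 h5
      _ = (ν*a) ^ (2*j) / ((2*j)! : ℝ) * t ^ (w.re - 1) := by
          rw [Real.rpow_natCast, mul_pow]
          ring
  have hsum : Summable fun j : ℕ => ∫ t in Ioo (0:ℝ) a, ‖F j t‖ := by
    apply Summable.of_nonneg_of_le
      (fun j => integral_nonneg (fun t => norm_nonneg _)) hbound
    exact summable_aux (ν*a) _
  have hswap := MeasureTheory.integral_tsum_of_summable_integral_norm hFint hsum
  have hpt : ∀ t ∈ Ioo (0:ℝ) a, (∑' j : ℕ, F j t) = ((Real.cos (ν*t) : ℝ):ℂ) * (t:ℂ)^(w-1) := by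
    intro t ht
    have ht0 : (0:ℝ) < t := ht.1
    have hcos : ((Real.cos (ν*t) : ℝ):ℂ) = Complex.cos ((ν*t : ℝ):ℂ) := by
      rw [Complex.ofReal_cos]
    rw [hcos, Complex.cos_eq_tsum, ← tsum_mul_right]
    apply tsum_congr
    intro j
    have he : ((ν*t : ℝ):ℂ)^(2*j) = ((ν:ℝ):ℂ)^(2*j) * ((t:ℝ):ℂ)^(2*j) := by
      push_cast; rw [mul_pow]
    rw [he]
    have hm : ((t:ℝ):ℂ)^(2*j) = (t:ℂ)^(((2*j:ℕ):ℂ)) := by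
      rw [Complex.cpow_natCast]
    have hadd : (t:ℂ)^(((2*j:ℕ):ℂ) + w - 1) = (t:ℂ)^(((2*j:ℕ):ℂ)) * (t:ℂ)^(w-1) := by
      rw [show ((2*j:ℕ):ℂ) + w - 1 = ((2*j:ℕ):ℂ) + (w-1) by ring]
      exact Complex.cpow_add _ _ (Complex.ofReal_ne_zero.mpr ht0.ne')
    rw [hF]
    simp only []
    rw [hadd, ← hm]
    ring
  calc ∫ t in Ioo (0:ℝ) a, ((Real.cos (ν*t) : ℝ):ℂ) * (t:ℂ)^(w-1)
      = ∫ t in Ioo (0:ℝ) a, (∑' j : ℕ, F j t) :=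
        (setIntegral_congr_fun measurableSet_Ioo (fun t ht => (hpt t ht).symm))
    _ = ∑' j : ℕ, ∫ t in Ioo (0:ℝ) a, F j t := hswap.symm
    _ = ∑' j : ℕ, ((-1:ℂ)^j / ((2*j)! : ℂ)) * ((ν:ℝ):ℂ)^(2*j)
          * (a:ℂ)^(((2*j:ℕ):ℂ)+w) / (((2*j:ℕ):ℂ)+w) := by
        apply tsum_congr
        intro j
        have hmull : (∫ t in Ioo (0:ℝ) a, ((-1:ℂ)^j / ((2*j)! : ℂ)) * ((ν:ℝ):ℂ)^(2*j)
              * (t:ℂ)^(((2*j:ℕ):ℂ) + w - 1))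
            = ((-1:ℂ)^j / ((2*j)! : ℂ)) * ((ν:ℝ):ℂ)^(2*j)
              * ∫ t in Ioo (0:ℝ) a, (t:ℂ)^(((2*j:ℕ):ℂ) + w - 1) :=
          MeasureTheory.integral_const_mul _ _
        rw [hF]
        simp only []
        rw [hmull, integral_cpow_Ioo ha (hqre j),
          show ((2*j:ℕ):ℂ) + w - 1 + 1 = ((2*j:ℕ):ℂ) + w by ring]
        ring

/-- Integrability on a bounded interval. -/
lemma intOn_Ioo_cexp_cpow {a : ℝ} (ha : 0 < a) {z q : ℂ} (hz : z.re ≤ 0) (hq : -1 < q.re) :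
    IntegrableOn (fun t : ℝ => Complex.exp (z * t) * (t : ℂ) ^ q) (Ioo (0:ℝ) a) := by
  have hKint : IntegrableOn (fun t : ℝ => t ^ q.re) (Ioo (0:ℝ) a) := by
    have h := intervalIntegral.intervalIntegrable_rpow' (a := 0) (b := a) (r := q.re) hq
    rw [intervalIntegrable_iff_integrableOn_Ioc_of_le ha.le] at h
    exact h.mono_set Ioo_subset_Ioc_self
  apply hKint.mono' (((contOn_cexp_mul_cpow z q).mono
    (fun t (ht : t ∈ Ioo (0:ℝ) a) => ht.1)).aestronglyMeasurable measurableSet_Ioo)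
  filter_upwards [ae_restrict_mem measurableSet_Ioo] with t ht
  rw [norm_cexp_mul_cpow z q ht.1]
  have h1 : Real.exp (z.re * t) ≤ 1 := by
    rw [Real.exp_le_one_iff]; exact mul_nonpos_of_nonpos_of_nonneg hz ht.1.le
  have h2 : (0:ℝ) ≤ t ^ q.re := Real.rpow_nonneg ht.1.le _
  calc Real.exp (z.re * t) * t ^ q.re ≤ 1 * t ^ q.re := mul_le_mul_of_nonneg_right h1 h2
    _ = t ^ q.re := one_mul _

lemma eps_limit {a : ℝ} (ha : 0 < a) {w : ℂ} (hw0 : 0 < w.re) (hw1 : w.re < 1)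
    {z : ℂ} (hzre : z.re = 0) (hz : z ≠ 0) :
    Complex.Gamma w * (-z) ^ (-w)
      = (∫ t in Ioo (0:ℝ) a, Complex.exp (z*t) * (t:ℂ)^(w-1))
        - Complex.exp (z*a) * (a:ℂ)^(w-1) / z
        - ((w-1)/z) * ∫ t in Ioi a, Complex.exp (z*t) * (t:ℂ)^(w-2) := by
  have him : z.im ≠ 0 := by
    intro h
    exact hz (Complex.ext hzre h)
  set l : Filter ℝ := 𝓝[>] (0:ℝ) with hl
  -- for each ε > 0 the exact identity
  have hkey : ∀ ε : ℝ, 0 < ε →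
      Complex.Gamma w * ((ε:ℂ) - z) ^ (-w)
        = (∫ t in Ioo (0:ℝ) a, Complex.exp ((z - ε)*t) * (t:ℂ)^(w-1))
          - Complex.exp ((z - ε)*a) * (a:ℂ)^(w-1) / (z - ε)
          - ((w-1)/(z - ε)) * ∫ t in Ioi a, Complex.exp ((z - ε)*t) * (t:ℂ)^(w-2) := by
    intro ε hε
    have hre : (z - (ε:ℂ)).re < 0 := by simp [hzre, hε]
    have hne : z - (ε:ℂ) ≠ 0 := by
      intro h
      have := congrArg Complex.re h
      simp [hzre] at this
      linarith
    have hint0 : IntegrableOn (fun t : ℝ => Complex.exp ((z - ε)*t) * (t:ℂ)^(w-1)) (Ioi 0) :=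
      intOn_Ioi_zero_cexp_cpow hre (by simp; linarith)
    have hgamma : ∫ t in Ioi (0:ℝ), Complex.exp ((z - ε)*t) * (t:ℂ)^(w-1)
        = Complex.Gamma w * ((ε:ℂ) - z) ^ (-w) := by
      have h := gamma_integral_cexp hw0 (z := (ε:ℂ) - z) (by simp [hzre, hε])
      rw [← h]
      refine setIntegral_congr_fun measurableSet_Ioi (fun t _ => ?_)
      rw [show -((ε:ℂ) - z) = z - ε by ring]
    have hsplit : ∫ t in Ioi (0:ℝ), Complex.exp ((z - ε)*t) * (t:ℂ)^(w-1)
        = (∫ t in Ioo (0:ℝ) a, Complex.exp ((z - ε)*t) * (t:ℂ)^(w-1))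
          + ∫ t in Ioi a, Complex.exp ((z - ε)*t) * (t:ℂ)^(w-1) := by
      rw [← integral_Ioc_eq_integral_Ioo, ← setIntegral_union (Ioc_disjoint_Ioi le_rfl)
        measurableSet_Ioi (hint0.mono_set Ioc_subset_Ioi_self)
        (hint0.mono_set (Ioi_subset_Ioi ha.le)), Ioc_union_Ioi_eq_Ioi ha.le]
    have hibp := ibp_Ioi ha hne hre.le hw1 (hint0.mono_set (Ioi_subset_Ioi ha.le))
    rw [← hgamma, hsplit, hibp]
    ring
  haveI : NeBot l := nhdsGT_neBot (0:ℝ)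
  -- limits
  have hzt : Tendsto (fun ε : ℝ => z - (ε:ℂ)) l (𝓝 z) := by
    have h : Tendsto (fun ε : ℝ => z - (ε:ℂ)) (𝓝 0) (𝓝 (z - ((0:ℝ):ℂ))) :=
      (continuous_const.sub Complex.continuous_ofReal).tendsto 0
    rw [Complex.ofReal_zero, sub_zero] at h
    exact h.mono_left nhdsWithin_le_nhds
  have hεz : Tendsto (fun ε : ℝ => (ε:ℂ) - z) l (𝓝 (-z)) := by
    have h : Tendsto (fun ε : ℝ => (ε:ℂ) - z) (𝓝 0) (𝓝 (((0:ℝ):ℂ) - z)) :=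
      (Complex.continuous_ofReal.sub continuous_const).tendsto 0
    rw [Complex.ofReal_zero, zero_sub] at h
    exact h.mono_left nhdsWithin_le_nhds
  have L1 : Tendsto (fun ε : ℝ => Complex.Gamma w * ((ε:ℂ) - z) ^ (-w)) l
      (𝓝 (Complex.Gamma w * (-z) ^ (-w))) := by
    apply Tendsto.const_mul
    have hc : ContinuousAt (fun x : ℂ => x ^ (-w)) (-z) :=
      continuousAt_cpow_const (Or.inr (by simpa using him))
    exact hc.tendsto.comp hεz
  -- limit of head integrals
  have La : Tendsto (fun ε : ℝ => ∫ t in Ioo (0:ℝ) a, Complex.exp ((z - ε)*t) * (t:ℂ)^(w-1)) l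
      (𝓝 (∫ t in Ioo (0:ℝ) a, Complex.exp (z*t) * (t:ℂ)^(w-1))) := by
    apply tendsto_integral_filter_of_dominated_convergence (fun t : ℝ => t ^ (w.re - 1))
    · filter_upwards with ε
      exact ((contOn_cexp_mul_cpow (z - ε) (w-1)).mono
        (fun t (ht : t ∈ Ioo (0:ℝ) a) => ht.1)).aestronglyMeasurable measurableSet_Ioo
    · filter_upwards [self_mem_nhdsWithin] with ε (hε : ε ∈ Ioi (0:ℝ))
      filter_upwards [ae_restrict_mem measurableSet_Ioo] with t ht
      rw [norm_cexp_mul_cpow _ _ ht.1]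
      have h1 : Real.exp ((z - ε).re * t) ≤ 1 := by
        rw [Real.exp_le_one_iff]
        apply mul_nonpos_of_nonpos_of_nonneg _ ht.1.le
        simp [hzre]; linarith [hε.out]
      have h2 : (0:ℝ) ≤ t ^ (w.re - 1) := Real.rpow_nonneg ht.1.le _
      have h3 : (w - 1).re = w.re - 1 := by simp
      rw [h3]
      nlinarith
    · have h := intervalIntegral.intervalIntegrable_rpow' (a := 0) (b := a)
        (r := w.re - 1) (by linarith)
      rw [intervalIntegrable_iff_integrableOn_Ioc_of_le ha.le] at h
      exact h.mono_set Ioo_subset_Ioc_self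
    · filter_upwards [ae_restrict_mem measurableSet_Ioo] with t ht
      exact ((hzt.mul_const ((t:ℝ):ℂ)).cexp.mul_const ((t:ℂ)^(w-1)))
  -- limit of boundary terms
  have Lb : Tendsto (fun ε : ℝ => Complex.exp ((z - ε)*a) * (a:ℂ)^(w-1) / (z - ε)) l
      (𝓝 (Complex.exp (z*a) * (a:ℂ)^(w-1) / z)) :=
    ((hzt.mul_const ((a:ℝ):ℂ)).cexp.mul_const ((a:ℂ)^(w-1))).div hzt hz
  -- limit of tail integrals
  have Lc : Tendsto (fun ε : ℝ => ∫ t in Ioi a, Complex.exp ((z - ε)*t) * (t:ℂ)^(w-2)) l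
      (𝓝 (∫ t in Ioi a, Complex.exp (z*t) * (t:ℂ)^(w-2))) := by
    apply tendsto_integral_filter_of_dominated_convergence (fun t : ℝ => t ^ (w.re - 2))
    · filter_upwards with ε
      exact ((contOn_cexp_mul_cpow (z - ε) (w-2)).mono
        (fun t (ht : t ∈ Ioi a) => lt_trans ha ht)).aestronglyMeasurable measurableSet_Ioi
    · filter_upwards [self_mem_nhdsWithin] with ε (hε : ε ∈ Ioi (0:ℝ))
      filter_upwards [ae_restrict_mem measurableSet_Ioi] with t ht
      have h0t : (0:ℝ) < t := lt_trans ha ht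
      rw [norm_cexp_mul_cpow _ _ h0t]
      have h1 : Real.exp ((z - ε).re * t) ≤ 1 := by
        rw [Real.exp_le_one_iff]
        apply mul_nonpos_of_nonpos_of_nonneg _ h0t.le
        simp [hzre]; linarith [hε.out]
      have h2 : (0:ℝ) ≤ t ^ (w.re - 2) := Real.rpow_nonneg h0t.le _
      have h3 : (w - 2).re = w.re - 2 := by simp
      rw [h3]
      nlinarith
    · exact integrableOn_Ioi_rpow_of_lt (by linarith) ha
    · filter_upwards [ae_restrict_mem measurableSet_Ioi] with t ht
      exact ((hzt.mul_const ((t:ℝ):ℂ)).cexp.mul_const ((t:ℂ)^(w-2)))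
  have L2 : Tendsto (fun ε : ℝ =>
      (∫ t in Ioo (0:ℝ) a, Complex.exp ((z - ε)*t) * (t:ℂ)^(w-1))
        - Complex.exp ((z - ε)*a) * (a:ℂ)^(w-1) / (z - ε)
        - ((w-1)/(z - ε)) * ∫ t in Ioi a, Complex.exp ((z - ε)*t) * (t:ℂ)^(w-2)) l
      (𝓝 ((∫ t in Ioo (0:ℝ) a, Complex.exp (z*t) * (t:ℂ)^(w-1))
        - Complex.exp (z*a) * (a:ℂ)^(w-1) / z
        - ((w-1)/z) * ∫ t in Ioi a, Complex.exp (z*t) * (t:ℂ)^(w-2))) :=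
    (La.sub Lb).sub (((tendsto_const_nhds.div hzt hz)).mul Lc)
  have heq : (fun ε : ℝ => Complex.Gamma w * ((ε:ℂ) - z) ^ (-w)) =ᶠ[l] (fun ε : ℝ =>
      (∫ t in Ioo (0:ℝ) a, Complex.exp ((z - ε)*t) * (t:ℂ)^(w-1))
        - Complex.exp ((z - ε)*a) * (a:ℂ)^(w-1) / (z - ε)
        - ((w-1)/(z - ε)) * ∫ t in Ioi a, Complex.exp ((z - ε)*t) * (t:ℂ)^(w-2)) := by
    filter_upwards [self_mem_nhdsWithin] with ε (hε : ε ∈ Ioi (0:ℝ))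
    exact hkey ε hε.out
  exact tendsto_nhds_unique (L1.congr' heq) L2

/-- let `a > 0`, `u > 0` and let `C` be the entire extension of
`w ↦ 2∫_a^∞ cos(2πut) t^(w−1) dt` (defined for `Re(w) < 0`). Then for `Re(w) > 0`,
`C(w) = γ₊(w) u^(−w) − 2∫₀^a cos(2πut) t^(w−1) dt
      = γ₊(w) u^(−w) − 2 Σ_{j≥0} ((−1)^j/(2j)!) (2πu)^(2j) a^(2j+w)/(2j+w)`. -/
theorem statement5 (a u : ℝ) (ha : 0 < a) (hu : 0 < u)
    (C : ℂ → ℂ) (hC : Differentiable ℂ C)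
    (hCint : ∀ w : ℂ, w.re < 0 →
      C w = 2 * ∫ t in Ioi a, (Real.cos (2 * π * u * t) : ℂ) * (t : ℂ) ^ (w - 1))
    (w : ℂ) (hw : 0 < w.re) :
    C w = gammaPlus w * (u : ℂ) ^ (-w)
        - 2 * ∫ t in Ioo (0:ℝ) a, (Real.cos (2 * π * u * t) : ℂ) * (t : ℂ) ^ (w - 1) ∧
    C w = gammaPlus w * (u : ℂ) ^ (-w)
        - 2 * ∑' j : ℕ, ((-1 : ℂ) ^ j / (Nat.factorial (2 * j) : ℂ))
            * ((2 * π * u : ℝ) : ℂ) ^ (2 * j)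
            * (a : ℂ) ^ ((2 * j : ℕ) + w) / ((2 * j : ℕ) + w) := by
  set ν : ℝ := 2*π*u with hν
  have hνpos : 0 < ν := by rw [hν]; positivity
  have hνC : ((ν:ℝ):ℂ) ≠ 0 := ofReal_ne_zero.mpr hνpos.ne'
  set z₁ : ℂ := (ν:ℂ) * I with hz₁def
  set z₂ : ℂ := (ν:ℂ) * (-I) with hz₂def
  have hz₁ : z₁ ≠ 0 := mul_ne_zero hνC I_ne_zero
  have hz₂ : z₂ ≠ 0 := mul_ne_zero hνC (neg_ne_zero.mpr I_ne_zero)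
  have hz₁re : z₁.re = 0 := by simp [hz₁def]
  have hz₂re : z₂.re = 0 := by simp [hz₂def]
  have hcos : ∀ t : ℝ, 2 * ((Real.cos (ν*t) : ℝ):ℂ)
      = Complex.exp (z₁*t) + Complex.exp (z₂*t) := by
    intro t
    rw [Complex.ofReal_cos, Complex.two_cos]
    congr 1
    · congr 1; rw [hz₁def]; push_cast; ring
    · congr 1; rw [hz₂def]; push_cast; ring
  set T : ℂ → ℂ → ℂ := fun z v => ∫ t in Ioi a, Complex.exp (z*t) * (t:ℂ)^(v-2) with hT
  set E : ℂ → ℂ := fun v =>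
      (-(Complex.exp (z₁*a) * (a:ℂ)^(v-1)/z₁) - ((v-1)/z₁) * T z₁ v)
      + (-(Complex.exp (z₂*a) * (a:ℂ)^(v-1)/z₂) - ((v-1)/z₂) * T z₂ v) with hE
  -- Step 1 : C = E on re < 0
  have step1 : ∀ v : ℂ, v.re < 0 → C v = E v := by
    intro v hv
    have hq : (v-1).re < -1 := by simp; linarith
    have hint1 : IntegrableOn (fun t : ℝ => Complex.exp (z₁*t) * (t:ℂ)^(v-1)) (Ioi a) :=
      intOn_Ioi_cexp_cpow ha (le_of_eq hz₁re) hq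
    have hint2 : IntegrableOn (fun t : ℝ => Complex.exp (z₂*t) * (t:ℂ)^(v-1)) (Ioi a) :=
      intOn_Ioi_cexp_cpow ha (le_of_eq hz₂re) hq
    have hsum : 2 * (∫ t in Ioi a, ((Real.cos (ν*t) : ℝ):ℂ) * (t:ℂ)^(v-1))
        = (∫ t in Ioi a, Complex.exp (z₁*t) * (t:ℂ)^(v-1))
          + ∫ t in Ioi a, Complex.exp (z₂*t) * (t:ℂ)^(v-1) := by
      rw [← integral_add hint1 hint2, ← MeasureTheory.integral_const_mul]
      refine setIntegral_congr_fun measurableSet_Ioi (fun t _ => ?_)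
      linear_combination ((t:ℂ)^(v-1)) * hcos t
    rw [hCint v hv, hsum, ibp_Ioi ha hz₁ (le_of_eq hz₁re) (by linarith) hint1,
      ibp_Ioi ha hz₂ (le_of_eq hz₂re) (by linarith) hint2, hE]
  -- Step 2 : C = E on re < 1 by analytic continuation
  have hVopen : IsOpen {v : ℂ | v.re < 1} := isOpen_lt Complex.continuous_re continuous_const
  have hEanal : AnalyticOnNhd ℂ E {v : ℂ | v.re < 1} := by
    apply DifferentiableOn.analyticOnNhd _ hVopen
    intro v hv
    apply DifferentiableAt.differentiableWithinAt
    have hapow : DifferentiableAt ℂ (fun v : ℂ => (a:ℂ)^(v-1)) v :=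
      (differentiableAt_id.sub (differentiableAt_const 1)).const_cpow
        (Or.inl (ofReal_ne_zero.mpr ha.ne'))
    have h1 : DifferentiableAt ℂ (fun v : ℂ =>
        -(Complex.exp (z₁*a) * (a:ℂ)^(v-1)/z₁) - ((v-1)/z₁) * T z₁ v) v := by
      apply DifferentiableAt.sub
      · exact (((differentiableAt_const _).mul hapow).div_const _).neg
      · exact ((differentiableAt_id.sub (differentiableAt_const 1)).div_const _).mul
          (diff_tail ha (le_of_eq hz₁re) hv)
    have h2 : DifferentiableAt ℂ (fun v : ℂ =>
        -(Complex.exp (z₂*a) * (a:ℂ)^(v-1)/z₂) - ((v-1)/z₂) * T z₂ v) v := by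
      apply DifferentiableAt.sub
      · exact (((differentiableAt_const _).mul hapow).div_const _).neg
      · exact ((differentiableAt_id.sub (differentiableAt_const 1)).div_const _).mul
          (diff_tail ha (le_of_eq hz₂re) hv)
    exact h1.add h2
  have hCanalV : AnalyticOnNhd ℂ C {v : ℂ | v.re < 1} :=
    hC.differentiableOn.analyticOnNhd hVopen
  have step2 : ∀ v : ℂ, v.re < 1 → C v = E v := by
    have hfreq : C =ᶠ[𝓝 (-1:ℂ)] E := by
      apply eventually_of_mem ((isOpen_lt Complex.continuous_re continuous_const).mem_nhds
        (by norm_num : (-1:ℂ) ∈ {v : ℂ | v.re < 0}))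
      exact fun v hv => step1 v hv
    intro v hv
    exact hCanalV.eqOn_of_preconnected_of_eventuallyEq hEanal
      (convex_halfSpace_re_lt 1).isPreconnected (by norm_num : (-1:ℂ) ∈ {v : ℂ | v.re < 1})
      hfreq hv
  -- Step 3 : E = R on the strip
  set R : ℂ → ℂ := fun v => gammaPlus v * (u:ℂ)^(-v)
      - 2 * ∫ t in Ioo (0:ℝ) a, ((Real.cos (ν*t) : ℝ):ℂ) * (t:ℂ)^(v-1) with hR
  have step3 : ∀ v : ℂ, 0 < v.re → v.re < 1 → E v = R v := by
    intro v hv0 hv1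
    have h1 := eps_limit ha hv0 hv1 hz₁re hz₁
    have h2 := eps_limit ha hv0 hv1 hz₂re hz₂
    have hneg1 : -z₁ = z₂ := by rw [hz₁def, hz₂def]; ring
    have hneg2 : -z₂ = z₁ := by rw [hz₁def, hz₂def]; ring
    rw [hneg1] at h1
    rw [hneg2] at h2
    have hcomb := gamma_pm_combine hu v
    rw [← hν, ← hz₁def, ← hz₂def] at hcomb
    have hq : (-1:ℝ) < (v-1).re := by simp; linarith
    have hhead : (∫ t in Ioo (0:ℝ) a, Complex.exp (z₁*t) * (t:ℂ)^(v-1))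
        + (∫ t in Ioo (0:ℝ) a, Complex.exp (z₂*t) * (t:ℂ)^(v-1))
        = 2 * ∫ t in Ioo (0:ℝ) a, ((Real.cos (ν*t) : ℝ):ℂ) * (t:ℂ)^(v-1) := by
      rw [← integral_add (intOn_Ioo_cexp_cpow ha (le_of_eq hz₁re) hq)
        (intOn_Ioo_cexp_cpow ha (le_of_eq hz₂re) hq), ← MeasureTheory.integral_const_mul]
      refine setIntegral_congr_fun measurableSet_Ioo (fun t _ => ?_)
      linear_combination (-((t:ℂ)^(v-1))) * hcos t
    rw [hE, hR]
    simp only [hT]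
    linear_combination -h1 - h2 + hcomb - hhead
  -- Step 4 : C = R on re > 0 by analytic continuation
  have hUopen : IsOpen {v : ℂ | 0 < v.re} := isOpen_lt continuous_const Complex.continuous_re
  have hRanal : AnalyticOnNhd ℂ R {v : ℂ | 0 < v.re} := by
    apply DifferentiableOn.analyticOnNhd _ hUopen
    intro v hv
    apply DifferentiableAt.differentiableWithinAt
    apply DifferentiableAt.sub
    · apply DifferentiableAt.mul
      · -- gammaPlus
        have hpow : DifferentiableAt ℂ (fun v : ℂ => (2*(π:ℂ))^(-v)) v :=
          differentiableAt_id.neg.const_cpow (Or.inl (by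
            simp only [ne_eq, mul_eq_zero, not_or]
            exact ⟨two_ne_zero, ofReal_ne_zero.mpr Real.pi_ne_zero⟩))
        have hcosd : DifferentiableAt ℂ (fun v : ℂ => Complex.cos ((π:ℂ)*v/2)) v :=
          Complex.differentiable_cos.differentiableAt.comp v
            (((differentiableAt_const _).mul differentiableAt_id).div_const 2)
        have hΓ : DifferentiableAt ℂ Complex.Gamma v := by
          apply Complex.differentiableAt_Gamma
          intro m hm
          have : v.re = -(m:ℝ) := by rw [hm]; simp
          have hv' : (0:ℝ) < v.re := hv
          rw [this] at hv'
          have : (0:ℝ) ≤ (m:ℝ) := Nat.cast_nonneg m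
          linarith
        have : DifferentiableAt ℂ gammaPlus v := by
          apply DifferentiableAt.mul _ hΓ
          apply DifferentiableAt.mul _ hcosd
          exact (differentiableAt_const 2).mul hpow
        exact this
      · exact differentiableAt_id.neg.const_cpow (Or.inl (ofReal_ne_zero.mpr hu.ne'))
    · exact (differentiableAt_const 2).mul (diff_head ha ν hv)
  have hCanalU : AnalyticOnNhd ℂ C {v : ℂ | 0 < v.re} :=
    hC.differentiableOn.analyticOnNhd hUopen
  have step4 : C w = R w := by
    have hSopen : IsOpen ({v : ℂ | 0 < v.re} ∩ {v : ℂ | v.re < 1}) :=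
      hUopen.inter hVopen
    have hmem : (1/2 : ℂ) ∈ ({v : ℂ | 0 < v.re} ∩ {v : ℂ | v.re < 1}) := by
      constructor <;> norm_num
    have hfreq : C =ᶠ[𝓝 (1/2:ℂ)] R := by
      apply eventually_of_mem (hSopen.mem_nhds hmem)
      exact fun v hv => (step2 v hv.2).trans (step3 v hv.1 hv.2)
    exact hCanalU.eqOn_of_preconnected_of_eventuallyEq hRanal
      (convex_halfSpace_re_gt 0).isPreconnected (by norm_num : (1/2:ℂ) ∈ {v : ℂ | 0 < v.re})
      hfreq hw
  constructor
  · exact step4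
  · rw [step4, hR]
    simp only []
    rw [series_head ha hνpos hw]
end
end
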